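/- arXiv:1910.12860 — 8 statements merged into one kernel-verified Lean document; each statement's English description precedes it below -/
import Mathlib

section
/- Let n ≥ 3 and m ≥ 2 be integers. Then the metric dimension of the jellyfish graph JFG(n, m) equals nm − n. -/
open SimpleGraph

/-- Vertex type of the jellyfish graph `JFG(n, m)`: cycle vertices (left) and
pendant vertices (right, a cycle vertex together with a pendant index). -/
abbrev JVert (n m : ℕ) := (ZMod n) ⊕ ((ZMod n) × Fin m)

/-- The jellyfish graph `JFG(n, m)`: the cycle `C_n` together with `m` pendant
vertices attached to each cycle vertex. -/
def jellyfish (n m : ℕ) : SimpleGraph (JVert n m) where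
  Adj u v :=
    match u, v with
    | Sum.inl i, Sum.inl j => i ≠ j ∧ (i - j = 1 ∨ j - i = 1)
    | Sum.inl i, Sum.inr p => p.1 = i
    | Sum.inr p, Sum.inl i => p.1 = i
    | Sum.inr _, Sum.inr _ => False
  symm := by
    constructor
    rintro (i | p) (j | q) h
    · exact ⟨h.1.symm, h.2.symm⟩
    · exact h
    · exact h
    · exact h
  loopless := by
    constructor
    rintro (i | p) h
    · exact h.1 rfl
    · exact h

/-- `W` is a resolving set of `G`. -/
def IsResolving {V : Type*} (G : SimpleGraph V) (W : Set V) : Prop :=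
  ∀ u v : V, u ≠ v → ∃ w ∈ W, G.dist u w ≠ G.dist v w

/-- The metric dimension of `G`: the minimum cardinality of a resolving set. -/
noncomputable def metricDim {V : Type*} (G : SimpleGraph V) : ℕ :=
  sInf {k | ∃ W : Set V, IsResolving G W ∧ W.ncard = k}

private lemma iso_dist_le {V : Type*} {G : SimpleGraph V} (φ : G ≃g G) (u v : V) :
    G.dist (φ u) (φ v) ≤ G.dist u v := by
  by_cases h : G.Reachable u v
  · obtain ⟨p, hp⟩ := h.exists_walk_length_eq_dist
    calc G.dist (φ u) (φ v) ≤ (p.map φ.toHom).length := SimpleGraph.dist_le _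
      _ = G.dist u v := by rw [SimpleGraph.Walk.length_map, hp]
  · have h2 : ¬ G.Reachable (φ u) (φ v) := by
      intro hr
      exact h (by simpa using hr.map φ.symm.toHom)
    simp [SimpleGraph.dist_eq_zero_of_not_reachable h2]

private lemma iso_dist_eq {V : Type*} {G : SimpleGraph V} (φ : G ≃g G) (u v : V) :
    G.dist (φ u) (φ v) = G.dist u v := by
  refine le_antisymm (iso_dist_le φ u v) ?_
  have := iso_dist_le φ.symm (φ u) (φ v)
  simpa using this

private lemma swap_adj_iff {V : Type*} [DecidableEq V] (G : SimpleGraph V) (a b : V)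
    (hab : ¬ G.Adj a b) (hnb : ∀ x, G.Adj a x ↔ G.Adj b x) (u v : V) :
    G.Adj (Equiv.swap a b u) (Equiv.swap a b v) ↔ G.Adj u v := by
  have key : ∀ u v, G.Adj u v → G.Adj (Equiv.swap a b u) (Equiv.swap a b v) := by
    intro u v huv
    obtain hua | hua := eq_or_ne u a
    · subst hua
      obtain hva | hva := eq_or_ne v u
      · exact ((G.loopless.irrefl _) (hva ▸ huv)).elim
      · obtain hvb | hvb := eq_or_ne v b
        · subst hvb
          exact (hab huv).elim
        · rw [Equiv.swap_apply_left, Equiv.swap_apply_of_ne_of_ne (Ne.symm (Ne.symm hva)) hvb]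
          exact (hnb v).mp huv
    · obtain hub | hub := eq_or_ne u b
      · subst hub
        obtain hva | hva := eq_or_ne v a
        · subst hva
          exact (hab huv.symm).elim
        · obtain hvb | hvb := eq_or_ne v u
          · exact ((G.loopless.irrefl _) (hvb ▸ huv)).elim
          · rw [Equiv.swap_apply_right, Equiv.swap_apply_of_ne_of_ne hva hvb]
            exact (hnb v).mpr huv
      · rw [Equiv.swap_apply_of_ne_of_ne hua hub]
        obtain hva | hva := eq_or_ne v a
        · subst hva
          rw [Equiv.swap_apply_left]
          exact ((hnb u).mp huv.symm).symm
        · obtain hvb | hvb := eq_or_ne v b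
          · subst hvb
            rw [Equiv.swap_apply_right]
            exact ((hnb u).mpr huv.symm).symm
          · rw [Equiv.swap_apply_of_ne_of_ne hva hvb]
            exact huv
  constructor
  · intro h
    have := key _ _ h
    simpa [Equiv.swap_apply_self] using this
  · exact key u v

private lemma jf_connected (n m : ℕ) (hn : 3 ≤ n) : (jellyfish n m).Connected := by
  haveI : NeZero n := ⟨by omega⟩
  haveI : Fact (1 < n) := ⟨by omega⟩
  have hreach : ∀ k : ℕ, (jellyfish n m).Reachable (Sum.inl (k : ZMod n)) (Sum.inl 0) := by
    intro k
    induction k with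
    | zero => exact by rw [Nat.cast_zero]
    | succ k ih =>
        refine (Adj.reachable ?_).trans ih
        refine ⟨?_, Or.inl ?_⟩
        · intro h
          have h' : (k : ZMod n) + 1 = (k : ZMod n) + 0 := by push_cast at h; simpa using h
          exact one_ne_zero (add_left_cancel h')
        · push_cast
          ring
  have hall : ∀ v : JVert n m, (jellyfish n m).Reachable v (Sum.inl 0) := by
    rintro (i | p)
    · obtain ⟨k, rfl⟩ := ZMod.natCast_zmod_surjective i
      exact hreach k
    · exact (Adj.reachable (show (jellyfish n m).Adj (Sum.inr p) (Sum.inl p.1) from rfl)).trans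
        (by obtain ⟨k, hk⟩ := ZMod.natCast_zmod_surjective p.1; rw [← hk]; exact hreach k)
  haveI : Nonempty (JVert n m) := ⟨Sum.inl 0⟩
  exact ⟨fun u v => (hall u).trans (hall v).symm⟩

private lemma jf_twin (n m : ℕ) (i : ZMod n) (j j' : Fin m) (w : JVert n m)
    (h1 : w ≠ Sum.inr (i, j)) (h2 : w ≠ Sum.inr (i, j')) :
    (jellyfish n m).dist (Sum.inr (i, j)) w = (jellyfish n m).dist (Sum.inr (i, j')) w := by
  classical
  obtain rfl | hjj := eq_or_ne j j'
  · rfl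
  set a : JVert n m := Sum.inr (i, j)
  set b : JVert n m := Sum.inr (i, j')
  have hab : ¬ (jellyfish n m).Adj a b := fun h => h
  have hnb : ∀ x, (jellyfish n m).Adj a x ↔ (jellyfish n m).Adj b x := by
    rintro (c | q)
    · exact Iff.rfl
    · exact Iff.rfl
  let φ : jellyfish n m ≃g jellyfish n m :=
    { toEquiv := Equiv.swap a b
      map_rel_iff' := swap_adj_iff (jellyfish n m) a b hab hnb _ _ }
  have hw : φ w = w := Equiv.swap_apply_of_ne_of_ne h1 h2
  have ha : φ a = b := Equiv.swap_apply_left a b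
  calc (jellyfish n m).dist a w = (jellyfish n m).dist (φ a) (φ w) := (iso_dist_eq φ a w).symm
    _ = (jellyfish n m).dist b w := by rw [hw, ha]

theorem jellyfish_metricDim (n m : ℕ) (hn : 3 ≤ n) (hm : 2 ≤ m) :
    metricDim (jellyfish n m) = n * m - n := by
  classical
  haveI : NeZero n := ⟨by omega⟩
  haveI : NeZero m := ⟨by omega⟩
  set G := jellyfish n m with hG
  have conn : G.Connected := jf_connected n m hn
  set e1 : Fin m := ⟨1, by omega⟩ with he1def
  have he1 : e1 ≠ 0 := by
    intro h
    have := congrArg Fin.val h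
    simp [he1def] at this
  -- the resolving set: all pendants with index ≠ 0
  set F : Finset (JVert n m) :=
    (Finset.univ ×ˢ (Finset.univ.erase (0 : Fin m))).image Sum.inr with hFdef
  have hmemF : ∀ (i : ZMod n) (j : Fin m), j ≠ 0 → Sum.inr (i, j) ∈ (F : Set (JVert n m)) := by
    intro i j hj
    simp [hFdef, hj]
  have hFcard : F.card = n * m - n := by
    rw [hFdef, Finset.card_image_of_injective _ Sum.inr_injective, Finset.card_product,
      Finset.card_univ, Finset.card_erase_of_mem (Finset.mem_univ _), Finset.card_univ,
      ZMod.card, Fintype.card_fin]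
    obtain ⟨m', rfl⟩ : ∃ m', m = m' + 1 := ⟨m - 1, by omega⟩
    simp [Nat.mul_succ]
  -- distance of a cycle vertex to its own pendant
  have d1 : ∀ (i : ZMod n) (j : Fin m), G.dist (Sum.inl i) (Sum.inr (i, j)) = 1 :=
    fun i j => SimpleGraph.dist_eq_one_iff_adj.mpr rfl
  have hres : IsResolving G (F : Set (JVert n m)) := by
    rintro (i | ⟨i, a⟩) (i' | ⟨i', b⟩) huv
    · -- two cycle vertices
      refine ⟨Sum.inr (i, e1), hmemF i e1 he1, ?_⟩
      rw [d1]
      intro h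
      have hadj : G.Adj (Sum.inl i') (Sum.inr (i, e1)) := SimpleGraph.dist_eq_one_iff_adj.mp h.symm
      exact huv (by rw [show i = i' from hadj])
    · -- cycle vertex vs pendant
      refine ⟨Sum.inr (i, e1), hmemF i e1 he1, ?_⟩
      rw [d1]
      intro h
      exact (SimpleGraph.dist_eq_one_iff_adj.mp h.symm : False)
    · -- pendant vs cycle vertex
      refine ⟨Sum.inr (i', e1), hmemF i' e1 he1, ?_⟩
      rw [d1]
      intro h
      exact (SimpleGraph.dist_eq_one_iff_adj.mp h : False)
    · -- two pendants
      obtain ha | ha := eq_or_ne a 0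
      · obtain hb | hb := eq_or_ne b 0
        · -- both have pendant index 0, so the cycle anchors differ
          subst ha; subst hb
          have hii : i ≠ i' := by
            intro h
            exact huv (by rw [h])
          refine ⟨Sum.inr (i, e1), hmemF i e1 he1, ?_⟩
          have hd2 : G.dist (Sum.inr (i, (0 : Fin m))) (Sum.inr (i, e1)) = 2 := by
            have hne : (Sum.inr (i, (0 : Fin m)) : JVert n m) ≠ Sum.inr (i, e1) := by
              simp [Prod.ext_iff]
              exact fun h => he1 h.symm
            have hle : G.dist (Sum.inr (i, (0 : Fin m))) (Sum.inr (i, e1)) ≤ 2 := by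
              simpa using SimpleGraph.dist_le
                (Walk.cons (show G.Adj (Sum.inr (i, (0 : Fin m))) (Sum.inl i) from rfl)
                  (Walk.cons (show G.Adj (Sum.inl i) (Sum.inr (i, e1)) from rfl) Walk.nil))
            have h0 : G.dist (Sum.inr (i, (0 : Fin m))) (Sum.inr (i, e1)) ≠ 0 :=
              fun h => hne (conn.dist_eq_zero_iff.mp h)
            have h1 : G.dist (Sum.inr (i, (0 : Fin m))) (Sum.inr (i, e1)) ≠ 1 :=
              fun h => (SimpleGraph.dist_eq_one_iff_adj.mp h : False)
            omega
          rw [hd2]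
          intro h
          obtain ⟨p, hp⟩ := conn.exists_walk_length_eq_dist (Sum.inr (i', (0 : Fin m)))
            (Sum.inr (i, e1))
          rw [← h] at hp
          have a1 := p.adj_getVert_succ (i := 0) (by omega)
          have a2 := p.adj_getVert_succ (i := 1) (by omega)
          rw [p.getVert_zero] at a1
          have hend : p.getVert 2 = Sum.inr (i, e1) := by
            have := p.getVert_length
            rwa [hp] at this
          rw [hend] at a2
          rcases hx : p.getVert 1 with c | q
          · rw [hx] at a1 a2
            have e1' : i' = c := a1
            have e2' : i = c := a2
            exact hii (e2'.trans e1'.symm)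
          · rw [hx] at a2
            exact (a2 : False)
        · -- second pendant index nonzero: use v itself
          refine ⟨Sum.inr (i', b), hmemF i' b hb, ?_⟩
          rw [SimpleGraph.dist_self]
          exact (conn.pos_dist_of_ne huv).ne'
      · -- first pendant index nonzero: use u itself
        refine ⟨Sum.inr (i, a), hmemF i a ha, ?_⟩
        rw [SimpleGraph.dist_self]
        exact (conn.pos_dist_of_ne (Ne.symm huv)).ne
  have hmem : n * m - n ∈ {k | ∃ W : Set (JVert n m), IsResolving G W ∧ W.ncard = k} :=
    ⟨(F : Set (JVert n m)), hres, by rw [Set.ncard_coe_finset]; exact hFcard⟩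
  have hlow : ∀ k ∈ {k | ∃ W : Set (JVert n m), IsResolving G W ∧ W.ncard = k}, n * m - n ≤ k := by
    rintro k ⟨W, hW, rfl⟩
    have hpair : ∀ (i : ZMod n) (j j' : Fin m), j ≠ j' →
        Sum.inr (i, j) ∈ W ∨ Sum.inr (i, j') ∈ W := by
      intro i j j' hjj
      obtain ⟨w, hwW, hwd⟩ := hW (Sum.inr (i, j)) (Sum.inr (i, j')) (by simp [hjj])
      by_contra hc
      push_neg at hc
      refine hwd (jf_twin n m i j j' w ?_ ?_)
      · intro h; exact hc.1 (h ▸ hwW)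
      · intro h; exact hc.2 (h ▸ hwW)
    set T : Finset (ZMod n × Fin m) :=
      Finset.univ.filter (fun p => Sum.inr p ∈ W) with hTdef
    have hT1 : T.card ≤ W.ncard := by
      have hsub : (T.image Sum.inr : Finset (JVert n m)) ⊆ (Set.toFinite W).toFinset := by
        intro x hx
        simp only [Finset.mem_image] at hx
        obtain ⟨p, hp, rfl⟩ := hx
        rw [Set.Finite.mem_toFinset]
        exact (Finset.mem_filter.mp hp).2
      calc T.card = (T.image Sum.inr).card :=
            (Finset.card_image_of_injective _ Sum.inr_injective).symm
        _ ≤ (Set.toFinite W).toFinset.card := Finset.card_le_card hsub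
        _ = W.ncard := (Set.ncard_eq_toFinset_card W (Set.toFinite W)).symm
    have hTc : (Finset.univ.filter (fun p : ZMod n × Fin m => ¬ Sum.inr p ∈ W)).card ≤ n := by
      have hinj : Set.InjOn Prod.fst
          (((Finset.univ.filter (fun p : ZMod n × Fin m => ¬ Sum.inr p ∈ W)) :
            Finset (ZMod n × Fin m)) : Set (ZMod n × Fin m)) := by
        intro p hp q hq hpq
        simp only [Finset.coe_filter, Set.mem_setOf_eq] at hp hq
        by_contra hne
        have hsnd : p.2 ≠ q.2 := fun h => hne (Prod.ext hpq h)
        obtain h | h := hpair p.1 p.2 q.2 hsnd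
        · exact hp.2 h
        · rw [hpq] at h
          exact hq.2 h
      calc (Finset.univ.filter (fun p : ZMod n × Fin m => ¬ Sum.inr p ∈ W)).card
          ≤ (Finset.univ : Finset (ZMod n)).card :=
            Finset.card_le_card_of_injOn Prod.fst (fun p _ => Finset.mem_univ _) hinj
        _ = n := by rw [Finset.card_univ, ZMod.card]
    have hsum : T.card +
        (Finset.univ.filter (fun p : ZMod n × Fin m => ¬ Sum.inr p ∈ W)).card = n * m := by
      rw [hTdef, Finset.card_filter_add_card_filter_not, Finset.card_univ,
        Fintype.card_prod, ZMod.card, Fintype.card_fin]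
    omega
  refine le_antisymm (Nat.sInf_le hmem) (le_csInf ⟨_, hmem⟩ hlow)
end

section
/- Let n ≥ 3 and m ≥ 2 be integers. Then the set W consisting of all pendant vertices of the jellyfish graph JFG(n, m) except the single pendant vertex v_{nm} (so |W| = nm − 1) is a resolving set of JFG(n, m). -/
open SimpleGraph

lemma jf_adj_pendant (n m : ℕ) (i : ZMod n) (a : Fin m) :
    (jellyfish n m).Adj (Sum.inl i) (Sum.inr (i, a)) := by
  show (i, a).1 = i
  rfl

lemma jf_not_adj_rr (n m : ℕ) (p q : ZMod n × Fin m) :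
    ¬ (jellyfish n m).Adj (Sum.inr p) (Sum.inr q) := by
  intro h
  exact h

lemma jf_adj_succ (n m : ℕ) (hn : 3 ≤ n) (i : ZMod n) :
    (jellyfish n m).Adj (Sum.inl i) (Sum.inl (i + 1)) := by
  haveI : Fact (1 < n) := ⟨by omega⟩
  refine ⟨?_, Or.inr (by ring)⟩
  intro h
  have h1 : (1 : ZMod n) = 0 := by
    have := congrArg (· - i) h
    simpa using this.symm
  exact one_ne_zero h1

lemma jf_preconnected (n m : ℕ) (hn : 3 ≤ n) : (jellyfish n m).Preconnected := by
  haveI : NeZero n := ⟨by omega⟩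
  have key : ∀ (k : ℕ) (i : ZMod n),
      (jellyfish n m).Reachable (Sum.inl i) (Sum.inl (i + (k : ZMod n))) := by
    intro k
    induction k with
    | zero => intro i; simpa using Reachable.refl (Sum.inl i)
    | succ k ih =>
      intro i
      have := (ih i).trans (jf_adj_succ n m hn (i + (k : ZMod n))).reachable
      simpa [add_assoc, Nat.cast_succ] using this
  have hinl : ∀ i j : ZMod n, (jellyfish n m).Reachable (Sum.inl i) (Sum.inl j) := by
    intro i j
    have := key (j - i).val i
    rwa [ZMod.natCast_val, ZMod.cast_id, add_sub_cancel] at this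
  rintro (i | ⟨i, a⟩) (j | ⟨j, b⟩)
  · exact hinl i j
  · exact (hinl i j).trans (jf_adj_pendant n m j b).reachable
  · exact ((jellyfish n m).adj_symm (jf_adj_pendant n m i a)).reachable.trans (hinl i j)
  · exact (((jellyfish n m).adj_symm (jf_adj_pendant n m i a)).reachable.trans (hinl i j)).trans
      (jf_adj_pendant n m j b).reachable

theorem jellyfish_pendants_minus_last_resolving (n m : ℕ) (hn : 3 ≤ n) (hm : 2 ≤ m) :
    IsResolving (jellyfish n m)
      (Set.range (Sum.inr : ZMod n × Fin m → JVert n m) \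
        {Sum.inr ((n : ZMod n), (⟨m - 1, by omega⟩ : Fin m))}) := by
  have hpre := jf_preconnected n m hn
  set ex : JVert n m := Sum.inr ((n : ZMod n), (⟨m - 1, by omega⟩ : Fin m)) with hex
  -- membership helper
  have hmem : ∀ p : ZMod n × Fin m, Sum.inr p ≠ ex →
      Sum.inr p ∈ (Set.range (Sum.inr : ZMod n × Fin m → JVert n m) \ {ex}) := by
    intro p hp
    exact ⟨⟨p, rfl⟩, hp⟩
  have hzero : ∀ i : ZMod n,
      (Sum.inr (i, (⟨0, by omega⟩ : Fin m)) : JVert n m) ≠ ex := by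
    intro i h
    rw [hex] at h
    have := (Prod.mk.injEq _ _ _ _).mp (Sum.inr.injEq _ _ ▸ h : _)
    have h2 := this.2
    simp only [Fin.mk.injEq] at h2
    omega
  rintro (i | ⟨i, a⟩) (j | ⟨j, b⟩) huv
  · -- both cycle vertices
    refine ⟨Sum.inr (i, ⟨0, by omega⟩), hmem _ (hzero i), ?_⟩
    have h1 : (jellyfish n m).dist (Sum.inl i) (Sum.inr (i, ⟨0, by omega⟩)) = 1 :=
      dist_eq_one_iff_adj.mpr (jf_adj_pendant n m i _)
    rw [h1]
    intro h2
    have : (jellyfish n m).Adj (Sum.inl j) (Sum.inr (i, ⟨0, by omega⟩)) :=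
      dist_eq_one_iff_adj.mp h2.symm
    have hij : i = j := this
    exact huv (by rw [hij])
  · -- cycle vertex vs pendant
    by_cases hvex : (Sum.inr (j, b) : JVert n m) = ex
    · -- v is the excluded vertex; use a pendant at i with index 0
      refine ⟨Sum.inr (i, ⟨0, by omega⟩), hmem _ (hzero i), ?_⟩
      have h1 : (jellyfish n m).dist (Sum.inl i) (Sum.inr (i, ⟨0, by omega⟩)) = 1 :=
        dist_eq_one_iff_adj.mpr (jf_adj_pendant n m i _)
      rw [h1]
      intro h2
      exact jf_not_adj_rr n m _ _ (dist_eq_one_iff_adj.mp h2.symm)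
    · -- v itself is in W
      refine ⟨Sum.inr (j, b), hmem _ hvex, ?_⟩
      have h0 : (jellyfish n m).dist (Sum.inr (j, b)) (Sum.inr (j, b)) = 0 := by simp
      rw [h0]
      exact ((hpre _ _).pos_dist_of_ne huv).ne'
  · -- pendant vs cycle vertex
    by_cases huex : (Sum.inr (i, a) : JVert n m) = ex
    · refine ⟨Sum.inr (j, ⟨0, by omega⟩), hmem _ (hzero j), ?_⟩
      have h1 : (jellyfish n m).dist (Sum.inl j) (Sum.inr (j, ⟨0, by omega⟩)) = 1 :=
        dist_eq_one_iff_adj.mpr (jf_adj_pendant n m j _)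
      rw [h1]
      intro h2
      exact jf_not_adj_rr n m _ _ (dist_eq_one_iff_adj.mp h2)
    · refine ⟨Sum.inr (i, a), hmem _ huex, ?_⟩
      have h0 : (jellyfish n m).dist (Sum.inr (i, a)) (Sum.inr (i, a)) = 0 := by simp
      rw [h0]
      exact ((hpre _ _).pos_dist_of_ne huv.symm).ne'.symm
  · -- both pendants: at least one is in W
    by_cases huex : (Sum.inr (i, a) : JVert n m) = ex
    · have hvex : (Sum.inr (j, b) : JVert n m) ≠ ex := fun h => huv (huex.trans h.symm)
      refine ⟨Sum.inr (j, b), hmem _ hvex, ?_⟩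
      have h0 : (jellyfish n m).dist (Sum.inr (j, b)) (Sum.inr (j, b)) = 0 := by simp
      rw [h0]
      exact ((hpre _ _).pos_dist_of_ne huv).ne'
    · refine ⟨Sum.inr (i, a), hmem _ huex, ?_⟩
      have h0 : (jellyfish n m).dist (Sum.inr (i, a)) (Sum.inr (i, a)) = 0 := by simp
      rw [h0]
      exact ((hpre _ _).pos_dist_of_ne huv.symm).ne'.symm
end

section
/- Let n ≥ 3 and m ≥ 2 be integers. Then the set W consisting of all pendant vertices of the jellyfish graph JFG(n, m) except one pendant vertex v_{im} at each cycle vertex i, for 1 ≤ i ≤ n (so |W| = nm − n), is a resolving set of JFG(n, m). -/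
open SimpleGraph

section aux

variable {n m : ℕ}

private lemma jf_adj_pend (i : ZMod n) (c : Fin m) :
    (jellyfish n m).Adj (Sum.inl i) (Sum.inr (i, c)) := rfl

private lemma jf_adj_pend' (i : ZMod n) (c : Fin m) :
    (jellyfish n m).Adj (Sum.inr (i, c)) (Sum.inl i) := rfl

private lemma jf_not_adj_pp (p q : ZMod n × Fin m) :
    ¬ (jellyfish n m).Adj (Sum.inr p) (Sum.inr q) := fun h => h

private lemma jf_adj_lr {i j : ZMod n} {c : Fin m}
    (h : (jellyfish n m).Adj (Sum.inl i) (Sum.inr (j, c))) : j = i := h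

private lemma jf_adj_rl {i j : ZMod n} {c : Fin m}
    (h : (jellyfish n m).Adj (Sum.inr (j, c)) (Sum.inl i)) : j = i := h

private lemma jf_reach_cycle (hn : 3 ≤ n) (i j : ZMod n) :
    (jellyfish n m).Reachable (Sum.inl i) (Sum.inl j) := by
  haveI : NeZero n := ⟨by omega⟩
  haveI : Fact (1 < n) := ⟨by omega⟩
  suffices h : ∀ k : ℕ, (jellyfish n m).Reachable (Sum.inl ((k : ZMod n))) (Sum.inl 0) by
    have hi := h i.val
    have hj := h j.val
    rw [ZMod.natCast_rightInverse i] at hi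
    rw [ZMod.natCast_rightInverse j] at hj
    exact hi.trans hj.symm
  intro k
  induction k with
  | zero => rw [Nat.cast_zero]
  | succ k ih =>
      by_cases hk : (((k + 1 : ℕ)) : ZMod n) = ((k : ℕ) : ZMod n)
      · rw [hk]; exact ih
      · refine (SimpleGraph.Adj.reachable ?_).trans ih
        refine ⟨by simpa using hk, Or.inl ?_⟩
        push_cast
        ring

private lemma jf_reach_pend (hn : 3 ≤ n) (p q : ZMod n × Fin m) :
    (jellyfish n m).Reachable (Sum.inr p) (Sum.inr q) := by
  exact ((jf_adj_pend' p.1 p.2).reachable.trans (jf_reach_cycle hn p.1 q.1)).trans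
    (jf_adj_pend q.1 q.2).reachable

private lemma jf_dist_pp_le (i : ZMod n) (a c : Fin m) :
    (jellyfish n m).dist (Sum.inr (i, a)) (Sum.inr (i, c)) ≤ 2 := by
  simpa using SimpleGraph.dist_le
    (Walk.cons (jf_adj_pend' i a) (Walk.cons (jf_adj_pend i c) Walk.nil))

private lemma jf_dist_pp_ne_two {i j : ZMod n} {b c : Fin m} (hij : j ≠ i)
    (hd : (jellyfish n m).dist (Sum.inr (j, b)) (Sum.inr (i, c)) = 2) : False := by
  obtain ⟨p, hp⟩ := SimpleGraph.exists_walk_of_dist_ne_zero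
    (u := (Sum.inr (j, b) : JVert n m)) (v := Sum.inr (i, c)) (by rw [hd]; simp)
  rw [hd] at hp
  cases p with
  | nil => simp at hp
  | @cons _ x _ h q =>
    cases q with
    | nil => simp at hp
    | @cons _ y _ h' q' =>
      cases q' with
      | nil =>
        rcases x with x | x
        · have hjx : j = x := jf_adj_rl h
          have hix : i = x := jf_adj_lr h'
          exact hij (hjx.trans hix.symm)
        · exact (jf_not_adj_pp _ _ h).elim
      | cons h'' q'' => simp at hp

end aux

theorem jellyfish_pendants_minus_one_each_resolving (n m : ℕ) (hn : 3 ≤ n) (hm : 2 ≤ m) :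
    IsResolving (jellyfish n m)
      {w : JVert n m | ∃ (i : ZMod n) (j : Fin m), (j : ℕ) ≠ m - 1 ∧ w = Sum.inr (i, j)} := by
  haveI : NeZero m := ⟨by omega⟩
  have h0m : ((0 : Fin m) : ℕ) ≠ m - 1 := by
    simp only [Fin.val_zero]; omega
  intro u v huv
  rcases u with i | ⟨i, a⟩ <;> rcases v with j | ⟨j, b⟩
  · -- both cycle vertices
    refine ⟨Sum.inr (i, 0), ⟨i, 0, h0m, rfl⟩, ?_⟩
    have h1 : (jellyfish n m).dist (Sum.inl i) (Sum.inr (i, 0)) = 1 :=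
      SimpleGraph.dist_eq_one_iff_adj.mpr (jf_adj_pend i 0)
    rw [h1]
    intro h2
    have := jf_adj_lr (SimpleGraph.dist_eq_one_iff_adj.mp h2.symm)
    exact huv (by rw [this])
  · -- cycle vs pendant
    refine ⟨Sum.inr (i, 0), ⟨i, 0, h0m, rfl⟩, ?_⟩
    have h1 : (jellyfish n m).dist (Sum.inl i) (Sum.inr (i, 0)) = 1 :=
      SimpleGraph.dist_eq_one_iff_adj.mpr (jf_adj_pend i 0)
    rw [h1]
    intro h2
    exact jf_not_adj_pp _ _ (SimpleGraph.dist_eq_one_iff_adj.mp h2.symm)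
  · -- pendant vs cycle
    refine ⟨Sum.inr (j, 0), ⟨j, 0, h0m, rfl⟩, ?_⟩
    have h1 : (jellyfish n m).dist (Sum.inl j) (Sum.inr (j, 0)) = 1 :=
      SimpleGraph.dist_eq_one_iff_adj.mpr (jf_adj_pend j 0)
    rw [h1]
    intro h2
    exact jf_not_adj_pp _ _ (SimpleGraph.dist_eq_one_iff_adj.mp h2)
  · -- both pendants
    by_cases hij : i = j
    · -- same cycle vertex, different pendant index
      subst hij
      have hab : a ≠ b := by
        intro h; exact huv (by rw [h])
      by_cases ha : (a : ℕ) ≠ m - 1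
      · refine ⟨Sum.inr (i, a), ⟨i, a, ha, rfl⟩, ?_⟩
        rw [SimpleGraph.dist_self]
        intro h
        have hr := jf_reach_pend (m := m) hn (i, b) (i, a)
        have := (hr.dist_eq_zero_iff).mp h.symm
        exact hab (by injection this with h'; exact (Prod.mk.injEq .. ▸ h').2.symm)
      · have hb : (b : ℕ) ≠ m - 1 := by
          push_neg at ha
          intro hb'
          exact hab (Fin.ext (ha.trans hb'.symm))
        refine ⟨Sum.inr (i, b), ⟨i, b, hb, rfl⟩, ?_⟩
        rw [SimpleGraph.dist_self]
        intro h
        have hr := jf_reach_pend (m := m) hn (i, a) (i, b)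
        have := (hr.dist_eq_zero_iff).mp h
        exact hab (by injection this with h'; exact (Prod.mk.injEq .. ▸ h').2)
    · -- different cycle vertices
      refine ⟨Sum.inr (i, 0), ⟨i, 0, h0m, rfl⟩, ?_⟩
      have hle : (jellyfish n m).dist (Sum.inr (i, a)) (Sum.inr (i, 0)) ≤ 2 :=
        jf_dist_pp_le i a 0
      have hge : 3 ≤ (jellyfish n m).dist (Sum.inr (j, b)) (Sum.inr (i, 0)) := by
        have hji : j ≠ i := fun h => hij h.symm
        have h0 : (jellyfish n m).dist (Sum.inr (j, b)) (Sum.inr (i, 0)) ≠ 0 := by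
          intro h
          have hr := jf_reach_pend (m := m) hn (j, b) (i, 0)
          have := (hr.dist_eq_zero_iff).mp h
          injection this with h'
          exact hji (congrArg Prod.fst h')
        have h1 : (jellyfish n m).dist (Sum.inr (j, b)) (Sum.inr (i, 0)) ≠ 1 := by
          intro h
          exact jf_not_adj_pp _ _ (SimpleGraph.dist_eq_one_iff_adj.mp h)
        have h2 : (jellyfish n m).dist (Sum.inr (j, b)) (Sum.inr (i, 0)) ≠ 2 :=
          fun h => jf_dist_pp_ne_two hji h
        omega
      omega
end

section
/- Let n ≥ 8 be an even integer and let k = n/2 − 1. Let Γ = Cay(ℤ_n, S_k) be the Cayley graph on the cyclic group ℤ_n with connection set S_k = {1, 2, ..., k} ∪ {n−k, ..., n−1} = ℤ_n \ {0, n/2} (so Γ is the cocktail party graph CP(k+1), i.e., the complete graph K_n with a perfect matching removed). Then the metric dimension of Γ equals k + 1. -/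
open SimpleGraph

/-- The Cayley graph `Cay(ℤ_n, S)` with connection set `S = ℤ_n \ {0, n/2}`
(for `n` even this is the cocktail party graph `CP(n/2)`, i.e. `K_n` minus a
perfect matching): `x ~ y` iff `y - x ∉ {0, n/2}`.  (For `n` even the set
`{0, n/2}` is closed under negation, so the condition is stated symmetrically;
the two conjuncts are then equivalent.) -/
def cocktailParty (n : ℕ) : SimpleGraph (ZMod n) where
  Adj x y := x ≠ y ∧ y - x ≠ ((n / 2 : ℕ) : ZMod n) ∧ x - y ≠ ((n / 2 : ℕ) : ZMod n)
  symm := by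
    constructor
    rintro x y ⟨h1, h2, h3⟩
    exact ⟨h1.symm, h3, h2⟩
  loopless := by
    constructor
    rintro x ⟨h1, -⟩
    exact h1 rfl

section Aux

variable {n : ℕ}

private lemma cp_MM (hev : Even n) : ((n / 2 : ℕ) : ZMod n) + ((n / 2 : ℕ) : ZMod n) = 0 := by
  rw [← Nat.cast_add]
  obtain ⟨m, hm⟩ := hev
  have h : n / 2 + n / 2 = n := by omega
  rw [h, ZMod.natCast_self]

private lemma cp_negM (hev : Even n) : -((n / 2 : ℕ) : ZMod n) = ((n / 2 : ℕ) : ZMod n) :=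
  neg_eq_of_add_eq_zero_left (cp_MM hev)

private lemma cp_M_ne_zero (hn : 8 ≤ n) : ((n / 2 : ℕ) : ZMod n) ≠ 0 := by
  haveI : NeZero n := ⟨by omega⟩
  rw [Ne, ZMod.natCast_eq_zero_iff]
  intro h
  have := Nat.le_of_dvd (by omega) h
  omega

private lemma cp_M_ne_one (hn : 8 ≤ n) : ((n / 2 : ℕ) : ZMod n) ≠ 1 := by
  intro h
  haveI : NeZero n := ⟨by omega⟩
  have h1 : ((n / 2 : ℕ) : ZMod n).val = ((1 : ℕ) : ZMod n).val := by
    rw [h]; norm_num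
  rw [ZMod.val_cast_of_lt (by omega), ZMod.val_cast_of_lt (by omega)] at h1
  omega

/-- Adjacency characterization. -/
private lemma cp_adj (hev : Even n) (x y : ZMod n) :
    (cocktailParty n).Adj x y ↔ x ≠ y ∧ y - x ≠ ((n / 2 : ℕ) : ZMod n) := by
  constructor
  · rintro ⟨h1, h2, -⟩; exact ⟨h1, h2⟩
  · rintro ⟨h1, h2⟩
    refine ⟨h1, h2, fun h3 => h2 ?_⟩
    have : y - x = -((n / 2 : ℕ) : ZMod n) := by
      rw [← h3]; ring
    rw [this, cp_negM hev]

private lemma cp_not_adj_antipode (hev : Even n) (x : ZMod n) :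
    ¬ (cocktailParty n).Adj x (x + ((n / 2 : ℕ) : ZMod n)) := by
  rw [cp_adj hev]
  push_neg
  intro _
  ring

private lemma cp_antipode_ne (hn : 8 ≤ n) (x : ZMod n) : x ≠ x + ((n / 2 : ℕ) : ZMod n) := by
  intro h
  exact cp_M_ne_zero hn (by linear_combination -h)

private lemma cp_dist_antipode (hn : 8 ≤ n) (hev : Even n) (x : ZMod n) :
    (cocktailParty n).dist x (x + ((n / 2 : ℕ) : ZMod n)) = 2 := by
  have hone : (1 : ZMod n) ≠ 0 := by
    haveI : Fact (1 < n) := ⟨by omega⟩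
    exact one_ne_zero
  have ha1 : (cocktailParty n).Adj x (x + 1) := by
    rw [cp_adj hev]
    constructor
    · intro h; exact hone (by linear_combination -h)
    · intro h
      exact cp_M_ne_one hn (by linear_combination -h)
  have ha2 : (cocktailParty n).Adj (x + 1) (x + ((n / 2 : ℕ) : ZMod n)) := by
    rw [cp_adj hev]
    constructor
    · intro h
      exact cp_M_ne_one hn (by linear_combination -h)
    · intro h
      exact hone (by linear_combination -h)
  have hwalk : (cocktailParty n).dist x (x + ((n / 2 : ℕ) : ZMod n)) ≤ 2 := by
    have := SimpleGraph.dist_le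
      (SimpleGraph.Walk.cons ha1 (SimpleGraph.Walk.cons ha2 SimpleGraph.Walk.nil))
    simpa using this
  have h0 : (cocktailParty n).dist x (x + ((n / 2 : ℕ) : ZMod n)) ≠ 0 := by
    rw [SimpleGraph.dist_ne_zero_iff_ne_and_reachable]
    exact ⟨cp_antipode_ne hn x,
      ⟨SimpleGraph.Walk.cons ha1 (SimpleGraph.Walk.cons ha2 SimpleGraph.Walk.nil)⟩⟩
  have h1 : (cocktailParty n).dist x (x + ((n / 2 : ℕ) : ZMod n)) ≠ 1 := fun h =>
    cp_not_adj_antipode hev x (SimpleGraph.dist_eq_one_iff_adj.mp h)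
  omega

/-- Distance from `x` to any vertex that is neither `x` nor its antipode is `1`. -/
private lemma cp_dist_other (hn : 8 ≤ n) (hev : Even n) {x y : ZMod n} (hxy : x ≠ y)
    (hant : y ≠ x + ((n / 2 : ℕ) : ZMod n)) :
    (cocktailParty n).dist x y = 1 := by
  rw [SimpleGraph.dist_eq_one_iff_adj, cp_adj hev]
  refine ⟨hxy, fun h => hant ?_⟩
  linear_combination h

/-- A set is resolving iff it meets every antipodal pair. -/
private lemma cp_resolving_iff (hn : 8 ≤ n) (hev : Even n) (W : Set (ZMod n)) :
    IsResolving (cocktailParty n) W ↔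
      ∀ x : ZMod n, x ∈ W ∨ x + ((n / 2 : ℕ) : ZMod n) ∈ W := by
  set M : ZMod n := ((n / 2 : ℕ) : ZMod n) with hMdef
  constructor
  · intro hres x
    obtain ⟨w, hwW, hw⟩ := hres x (x + M) (cp_antipode_ne hn x)
    by_contra hcon
    push_neg at hcon
    have hwx : w ≠ x := fun h => hcon.1 (h ▸ hwW)
    have hwxM : w ≠ x + M := fun h => hcon.2 (h ▸ hwW)
    have d1 : (cocktailParty n).dist x w = 1 := cp_dist_other hn hev hwx.symm hwxM
    have d2 : (cocktailParty n).dist (x + M) w = 1 := by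
      refine cp_dist_other hn hev hwxM.symm ?_
      intro h
      apply hwx
      have : w = x + (M + M) := by rw [h]; ring
      rwa [cp_MM hev, add_zero] at this
    exact hw (d1.trans d2.symm)
  · intro hcond u v huv
    by_cases hant : v = u + M
    · rcases hcond u with hu | huM
      · refine ⟨u, hu, ?_⟩
        rw [SimpleGraph.dist_self, SimpleGraph.dist_comm, hant, cp_dist_antipode hn hev]
        omega
      · refine ⟨u + M, huM, ?_⟩
        rw [cp_dist_antipode hn hev, hant, SimpleGraph.dist_self]
        omega
    · rcases hcond u with hu | huM
      · refine ⟨u, hu, ?_⟩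
        rw [SimpleGraph.dist_self]
        have : (cocktailParty n).dist v u ≠ 0 := by
          rw [SimpleGraph.dist_comm]
          by_cases h2 : v = u + M
          · exact absurd h2 hant
          · rw [cp_dist_other hn hev huv h2]; omega
        omega
      · refine ⟨u + M, huM, ?_⟩
        rw [cp_dist_antipode hn hev,
          cp_dist_other hn hev hant (fun h => huv (add_right_cancel h))]
        omega

end Aux

theorem cocktailParty_metricDim (n : ℕ) (hn : 8 ≤ n) (hev : Even n) (k : ℕ)
    (hk : k = n / 2 - 1) :
    metricDim (cocktailParty n) = k + 1 := by
  haveI : NeZero n := ⟨by omega⟩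
  set m : ℕ := n / 2 with hm
  have hkm : k + 1 = m := by omega
  have hn2 : n = 2 * m := by
    obtain ⟨t, ht⟩ := hev; omega
  set M : ZMod n := ((m : ℕ) : ZMod n) with hMdef
  set S : Set ℕ := {j | ∃ W : Set (ZMod n), IsResolving (cocktailParty n) W ∧ W.ncard = j} with hS
  -- the explicit resolving set {0, 1, ..., m-1}
  set F : Finset (ZMod n) := (Finset.range m).image (fun i => ((i : ℕ) : ZMod n)) with hF
  have hinj : ∀ i ∈ Finset.range m, ∀ j ∈ Finset.range m,
      ((i : ℕ) : ZMod n) = ((j : ℕ) : ZMod n) → i = j := by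
    intro i hi j hj h
    simp only [Finset.mem_range] at hi hj
    have := congrArg ZMod.val h
    rwa [ZMod.val_cast_of_lt (by omega), ZMod.val_cast_of_lt (by omega)] at this
  have hFcard : F.card = m := by
    rw [hF, Finset.card_image_of_injOn hinj, Finset.card_range]
  have hFres : IsResolving (cocktailParty n) (F : Set (ZMod n)) := by
    rw [cp_resolving_iff hn hev]
    intro x
    have hv : x.val < n := ZMod.val_lt x
    by_cases hvm : x.val < m
    · left
      simp only [hF, Finset.coe_image, Finset.coe_range, Set.mem_image, Set.mem_Iio]
      exact ⟨x.val, hvm, ZMod.natCast_zmod_val x⟩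
    · right
      simp only [hF, Finset.coe_image, Finset.coe_range, Set.mem_image, Set.mem_Iio]
      refine ⟨x.val - m, by omega, ?_⟩
      have : ((x.val - m : ℕ) : ZMod n) = ((x.val - m + n : ℕ) : ZMod n) := by
        rw [Nat.cast_add, ZMod.natCast_self, add_zero]
      rw [this]
      have h2 : x.val - m + n = x.val + m := by omega
      rw [h2, Nat.cast_add, ZMod.natCast_zmod_val]
  have hmem : m ∈ S := ⟨(F : Set (ZMod n)), hFres, by rw [Set.ncard_coe_finset, hFcard]⟩
  -- lower bound
  have hlb : ∀ j ∈ S, m ≤ j := by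
    rintro j ⟨W, hWres, rfl⟩
    rw [cp_resolving_iff hn hev] at hWres
    classical
    set f : Fin m → ZMod n := fun i =>
      if ((i : ℕ) : ZMod n) ∈ W then ((i : ℕ) : ZMod n) else ((i : ℕ) : ZMod n) + M with hf
    have hfW : ∀ i, f i ∈ W := by
      intro i
      rw [hf]
      by_cases h : ((i : ℕ) : ZMod n) ∈ W
      · simpa [h] using h
      · rcases hWres ((i : ℕ) : ZMod n) with h' | h'
        · exact absurd h' h
        · simpa [h] using h'
    have hcastne : ∀ i j : Fin m, ¬ (((i : ℕ) : ZMod n) = ((j : ℕ) : ZMod n) + M) := by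
      intro i j h
      have : ((i : ℕ) : ZMod n) = (((j : ℕ) + m : ℕ) : ZMod n) := by
        rw [Nat.cast_add]; exact h
      have hval := congrArg ZMod.val this
      rw [ZMod.val_cast_of_lt (by omega), ZMod.val_cast_of_lt (by omega)] at hval
      omega
    have hfinj : Function.Injective f := by
      intro i j h
      rw [hf] at h
      simp only at h
      have hij : ((i : ℕ) : ZMod n) = ((j : ℕ) : ZMod n) := by
        by_cases hi : ((i : ℕ) : ZMod n) ∈ W <;> by_cases hj : ((j : ℕ) : ZMod n) ∈ W <;>
            simp only [hi, hj, if_pos, if_neg, if_true, if_false] at h <;>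
          first
            | exact h
            | exact absurd h (hcastne i j)
            | exact absurd h.symm (hcastne j i)
            | exact add_right_cancel h
      have := congrArg ZMod.val hij
      rw [ZMod.val_cast_of_lt (by omega), ZMod.val_cast_of_lt (by omega)] at this
      exact Fin.ext this
    have hg : Function.Injective (fun i : Fin m => (⟨f i, hfW i⟩ : W)) := by
      intro i j h
      exact hfinj (congrArg Subtype.val h)
    have hcard := Nat.card_le_card_of_injective _ hg
    rwa [Nat.card_eq_fintype_card, Fintype.card_fin, Nat.card_coe_set_eq] at hcard
  rw [hkm]
  exact le_antisymm (Nat.sInf_le hmem) (le_csInf ⟨m, hmem⟩ hlb)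
end

section
/- Let n ≥ 8 be an even integer and let k = n/2 − 1. Let Γ = Cay(ℤ_n, S_k) be the Cayley graph on ℤ_n with connection set S_k = ℤ_n \ {0, n/2}. Then no clique of Γ of cardinality k is a resolving set of Γ; in particular, the set W = {1, 2, ..., k} is a clique of Γ that is not a resolving set, since the two vertices k + 1 and n have the same distance to every vertex of W. -/
open SimpleGraph

theorem cocktailParty_clique_k_not_resolving (n : ℕ) (hn : 8 ≤ n) (hev : Even n) (k : ℕ)
    (hk : k = n / 2 - 1) :
    (∀ W : Set (ZMod n), (cocktailParty n).IsClique W → W.ncard = k →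
      ¬ IsResolving (cocktailParty n) W) ∧
    (cocktailParty n).IsClique ((fun i : ℕ => (i : ZMod n)) '' Set.Icc 1 k) ∧
    ¬ IsResolving (cocktailParty n) ((fun i : ℕ => (i : ZMod n)) '' Set.Icc 1 k) ∧
    ∀ w ∈ (fun i : ℕ => (i : ZMod n)) '' Set.Icc 1 k,
      (cocktailParty n).dist ((k + 1 : ℕ) : ZMod n) w =
        (cocktailParty n).dist ((n : ℕ) : ZMod n) w := by
  haveI : NeZero n := ⟨by omega⟩
  obtain ⟨m, hm⟩ := hev
  have hm2 : n / 2 = m := by omega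
  have hk' : k = m - 1 := by omega
  have hm4 : 4 ≤ m := by omega
  set M : ZMod n := ((m : ℕ) : ZMod n) with hM
  -- basic arithmetic over ZMod n
  have hMM : M + M = 0 := by
    rw [hM, ← Nat.cast_add, ← hm, ZMod.natCast_self]
  have hM0 : M ≠ 0 := by
    rw [hM, Ne, ZMod.natCast_eq_zero_iff]
    intro h
    have := Nat.le_of_dvd (by omega) h
    omega
  have hneg : -M = M := neg_eq_of_add_eq_zero_left hMM
  have hinj : ∀ a b : ℕ, a < n → b < n → (a : ZMod n) = (b : ZMod n) → a = b := by
    intro a b ha hb h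
    have := congrArg ZMod.val h
    rwa [ZMod.val_natCast_of_lt ha, ZMod.val_natCast_of_lt hb] at this
  have hadj : ∀ x y : ZMod n,
      (cocktailParty n).Adj x y ↔ (x ≠ y ∧ y - x ≠ M ∧ x - y ≠ M) := by
    intro x y
    rw [hM, ← hm2]
    exact Iff.rfl
  have hdist1 : ∀ x y : ZMod n, (cocktailParty n).Adj x y →
      (cocktailParty n).dist x y = 1 := by
    intro x y h
    exact (SimpleGraph.dist_eq_one_iff_adj).mpr h
  -- Part 1 : no clique of cardinality k is resolving
  have part1 : ∀ W : Set (ZMod n), (cocktailParty n).IsClique W → W.ncard = k →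
      ¬ IsResolving (cocktailParty n) W := by
    intro W hW hcard hres
    -- W and W + M are disjoint
    have hdisj : Disjoint W ((· + M) '' W) := by
      rw [Set.disjoint_left]
      rintro x hx ⟨w, hw, rfl⟩
      rcases eq_or_ne (w + M) w with h | h
      · exact hM0 (by linear_combination h)
      · have := (hadj _ _).mp (hW hx hw h)
        exact this.2.2 (by ring)
    have himg : ((· + M) '' W).ncard = k := by
      rw [Set.ncard_image_of_injective _ (add_left_injective M), hcard]
    have hcardn : (Set.univ : Set (ZMod n)).ncard = n := by
      rw [Set.ncard_univ, Nat.card_eq_fintype_card, ZMod.card]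
    have hle : (W ∪ (· + M) '' W).ncard ≤ 2 * k := by
      have := Set.ncard_union_le W ((· + M) '' W)
      omega
    have hex : ∃ a : ZMod n, a ∉ W ∪ (· + M) '' W := by
      by_contra h
      push_neg at h
      have huniv : W ∪ (· + M) '' W = Set.univ := Set.eq_univ_of_forall h
      rw [huniv, hcardn] at hle
      omega
    obtain ⟨a, ha⟩ := hex
    have haW : a ∉ W := fun h => ha (Set.mem_union_left _ h)
    have haW' : ∀ w ∈ W, a ≠ w + M := by
      intro w hw h
      exact ha (Set.mem_union_right _ ⟨w, hw, h.symm⟩)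
    have hne : a ≠ a + M := by
      intro h
      exact hM0 (by linear_combination -h)
    obtain ⟨w, hw, hd⟩ := hres a (a + M) hne
    apply hd
    have hAaw : (cocktailParty n).Adj a w := by
      rw [hadj]
      refine ⟨fun h => haW (h ▸ hw), fun h => ?_, fun h => ?_⟩
      · exact haW' w hw (by linear_combination -h - hMM)
      · exact haW' w hw (by linear_combination h)
    have hAaMw : (cocktailParty n).Adj (a + M) w := by
      rw [hadj]
      refine ⟨fun h => ?_, fun h => ?_, fun h => ?_⟩
      · exact haW' w hw (by linear_combination h - hMM)
      · have hw' : w = a := by linear_combination h + hMM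
        exact haW (hw' ▸ hw)
      · have hw' : w = a := by linear_combination -h
        exact haW (hw' ▸ hw)
    rw [hdist1 _ _ hAaw, hdist1 _ _ hAaMw]
  -- key arithmetic lemma for the explicit clique
  have key : ∀ i j : ℕ, 1 ≤ i → i ≤ k → 1 ≤ j → j ≤ k → (j : ZMod n) - (i : ZMod n) ≠ M := by
    intro i j hi1 hik hj1 hjk h
    rcases le_or_gt i j with hle | hlt
    · have hc : ((j - i : ℕ) : ZMod n) = ((m : ℕ) : ZMod n) := by
        rw [Nat.cast_sub hle]; exact h
      have := hinj (j - i) m (by omega) (by omega) hc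
      omega
    · have h' : (i : ZMod n) - (j : ZMod n) = M := by
        have : (i : ZMod n) - (j : ZMod n) = -((j : ZMod n) - (i : ZMod n)) := by ring
        rw [this, h, hneg]
      have hc : ((i - j : ℕ) : ZMod n) = ((m : ℕ) : ZMod n) := by
        rw [Nat.cast_sub (le_of_lt hlt)]; exact h'
      have := hinj (i - j) m (by omega) (by omega) hc
      omega
  have part2 : (cocktailParty n).IsClique ((fun i : ℕ => (i : ZMod n)) '' Set.Icc 1 k) := by
    rintro x ⟨i, hi, rfl⟩ y ⟨j, hj, rfl⟩ hne
    simp only [Set.mem_Icc] at hi hj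
    rw [hadj]
    exact ⟨hne, key i j hi.1 hi.2 hj.1 hj.2, key j i hj.1 hj.2 hi.1 hi.2⟩
  have hk1M : ((k + 1 : ℕ) : ZMod n) = M := by
    rw [hM, show k + 1 = m from by omega]
  have hn0 : ((n : ℕ) : ZMod n) = 0 := ZMod.natCast_self n
  have part4 : ∀ w ∈ (fun i : ℕ => (i : ZMod n)) '' Set.Icc 1 k,
      (cocktailParty n).dist ((k + 1 : ℕ) : ZMod n) w =
        (cocktailParty n).dist ((n : ℕ) : ZMod n) w := by
    rintro w ⟨i, hi, rfl⟩
    simp only [Set.mem_Icc] at hi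
    show (cocktailParty n).dist ((k + 1 : ℕ) : ZMod n) ((i : ℕ) : ZMod n) =
      (cocktailParty n).dist ((n : ℕ) : ZMod n) ((i : ℕ) : ZMod n)
    rw [hk1M, hn0]
    have hAMi : (cocktailParty n).Adj M ((i : ℕ) : ZMod n) := by
      rw [hadj]
      refine ⟨fun h => ?_, fun h => ?_, fun h => ?_⟩
      · have := hinj m i (by omega) (by omega) h
        omega
      · have hc : ((i : ℕ) : ZMod n) = ((0 : ℕ) : ZMod n) := by
          push_cast
          linear_combination h + hMM
        have := hinj i 0 (by omega) (by omega) hc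
        omega
      · have hc : ((i : ℕ) : ZMod n) = ((0 : ℕ) : ZMod n) := by
          push_cast
          linear_combination -h
        have := hinj i 0 (by omega) (by omega) hc
        omega
    have hA0i : (cocktailParty n).Adj 0 ((i : ℕ) : ZMod n) := by
      rw [hadj]
      refine ⟨fun h => ?_, fun h => ?_, fun h => ?_⟩
      · have := hinj 0 i (by omega) (by omega) (by push_cast; exact h)
        omega
      · have hc : ((i : ℕ) : ZMod n) = ((m : ℕ) : ZMod n) := by linear_combination h
        have := hinj i m (by omega) (by omega) hc
        omega
      · have hc : ((i : ℕ) : ZMod n) = ((m : ℕ) : ZMod n) := by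
          linear_combination -h - hMM
        have := hinj i m (by omega) (by omega) hc
        omega
    rw [hdist1 _ _ hAMi, hdist1 _ _ hA0i]
  have part3 : ¬ IsResolving (cocktailParty n) ((fun i : ℕ => (i : ZMod n)) '' Set.Icc 1 k) := by
    intro hres
    have hne : ((k + 1 : ℕ) : ZMod n) ≠ ((n : ℕ) : ZMod n) := by
      rw [hk1M, hn0]; exact hM0
    obtain ⟨w, hw, hd⟩ := hres _ _ hne
    exact hd (part4 w hw)
  exact ⟨part1, part2, part3, part4⟩
end

section
/- Let n ≥ 8 be an even integer and let k = n/2 − 1. Let Γ = Cay(ℤ_n, S_k) be the Cayley graph on ℤ_n with connection set S_k = ℤ_n \ {0, n/2}. Then the minimum cardinality of a doubly resolving set of Γ equals k + 1; in particular, the clique Z = {1, 2, ..., k, k+1} is a doubly resolving set of Γ. -/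
open SimpleGraph

/-- Vertices `x, y` doubly resolve `u, v` if `d(u,x) - d(u,y) ≠ d(v,x) - d(v,y)`;
`Z` is a doubly resolving set if every two distinct vertices are doubly resolved
by some two vertices of `Z`. -/
def IsDoublyResolving {V : Type*} (G : SimpleGraph V) (Z : Set V) : Prop :=
  ∀ u v : V, u ≠ v → ∃ x ∈ Z, ∃ y ∈ Z,
    (G.dist u x : ℤ) - (G.dist u y : ℤ) ≠ (G.dist v x : ℤ) - (G.dist v y : ℤ)

/-- `ψ(G)`: the minimum cardinality of a doubly resolving set of `G`. -/
noncomputable def doublyResolvingDim {V : Type*} (G : SimpleGraph V) : ℕ :=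
  sInf {k | ∃ Z : Set V, IsDoublyResolving G Z ∧ Z.ncard = k}

namespace CPAux

variable {n : ℕ}

lemma cast_inj_of_lt {a b : ℕ} (ha : a < n) (hb : b < n) (h : (a : ZMod n) = b) : a = b := by
  have h1 := ZMod.val_cast_of_lt ha
  have h2 := ZMod.val_cast_of_lt hb
  rw [h, h2] at h1
  exact h1.symm

section Even
variable (hn : 8 ≤ n) (hev : Even n)
include hn hev

lemma half_add_half : n / 2 + n / 2 = n := by
  obtain ⟨m, rfl⟩ := hev; omega

lemma MM : ((n / 2 : ℕ) : ZMod n) + ((n / 2 : ℕ) : ZMod n) = 0 := by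
  rw [← Nat.cast_add, half_add_half hn hev, ZMod.natCast_self]

lemma Mne0 : ((n / 2 : ℕ) : ZMod n) ≠ 0 := by
  intro h
  have h' : ((n / 2 : ℕ) : ZMod n) = ((0 : ℕ) : ZMod n) := by simpa using h
  have := cast_inj_of_lt (by omega) (by omega) h'
  omega

lemma addM_ne (x : ZMod n) : x + ((n / 2 : ℕ) : ZMod n) ≠ x := by
  intro h
  exact Mne0 hn hev (add_eq_left.mp h)

lemma antipode_symm {x y : ZMod n} (h : y = x + ((n / 2 : ℕ) : ZMod n)) :
    x = y + ((n / 2 : ℕ) : ZMod n) := by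
  rw [h, add_assoc, MM hn hev, add_zero]

lemma adj_iff {x y : ZMod n} :
    (cocktailParty n).Adj x y ↔ x ≠ y ∧ y ≠ x + ((n / 2 : ℕ) : ZMod n) := by
  have hmm := MM hn hev
  constructor
  · rintro ⟨h1, h2, h3⟩
    exact ⟨h1, fun h => h2 (by rw [h]; ring)⟩
  · rintro ⟨h1, h2⟩
    refine ⟨h1, fun h => h2 (by linear_combination h), fun h => h2 ?_⟩
    linear_combination -h - hmm

lemma dist_adj {x y : ZMod n} (h1 : x ≠ y) (h2 : y ≠ x + ((n / 2 : ℕ) : ZMod n)) :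
    (cocktailParty n).dist x y = 1 :=
  SimpleGraph.dist_eq_one_iff_adj.mpr ((adj_iff hn hev).mpr ⟨h1, h2⟩)

lemma one_ne_M : (1 : ZMod n) ≠ ((n / 2 : ℕ) : ZMod n) := by
  intro h
  have h' : ((1 : ℕ) : ZMod n) = ((n / 2 : ℕ) : ZMod n) := by simpa using h
  have := cast_inj_of_lt (by omega) (by omega) h'
  omega

lemma one_ne_zero' : (1 : ZMod n) ≠ 0 := by
  intro h
  have h' : ((1 : ℕ) : ZMod n) = ((0 : ℕ) : ZMod n) := by simpa using h
  have := cast_inj_of_lt (by omega) (by omega) h'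
  omega

lemma dist_antipode (x : ZMod n) :
    (cocktailParty n).dist x (x + ((n / 2 : ℕ) : ZMod n)) = 2 := by
  have hxy : x ≠ x + ((n / 2 : ℕ) : ZMod n) := (addM_ne hn hev x).symm
  have h1 : (1 : ZMod n) ≠ 0 := one_ne_zero' hn hev
  have a1 : (cocktailParty n).Adj x (x + 1) := by
    rw [adj_iff hn hev]
    exact ⟨fun h => h1 (left_eq_add.mp h),
           fun h => one_ne_M hn hev (add_left_cancel h)⟩
  have a2 : (cocktailParty n).Adj (x + 1) (x + ((n / 2 : ℕ) : ZMod n)) := by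
    rw [adj_iff hn hev]
    refine ⟨fun h => one_ne_M hn hev (add_left_cancel h), fun h => ?_⟩
    rw [add_right_comm] at h
    exact h1 (left_eq_add.mp h)
  have hle : (cocktailParty n).dist x (x + ((n / 2 : ℕ) : ZMod n)) ≤ 2 := by
    simpa using SimpleGraph.dist_le
      (SimpleGraph.Walk.cons a1 (SimpleGraph.Walk.cons a2 SimpleGraph.Walk.nil))
  have hpos : 0 < (cocktailParty n).dist x (x + ((n / 2 : ℕ) : ZMod n)) :=
    SimpleGraph.Reachable.pos_dist_of_ne
      ⟨SimpleGraph.Walk.cons a1 (SimpleGraph.Walk.cons a2 SimpleGraph.Walk.nil)⟩ hxy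
  have hne1 : (cocktailParty n).dist x (x + ((n / 2 : ℕ) : ZMod n)) ≠ 1 := by
    intro h
    have := SimpleGraph.dist_eq_one_iff_adj.mp h
    rw [adj_iff hn hev] at this
    exact this.2 rfl
  omega


lemma mem_Z {i : ℕ} (hi1 : 1 ≤ i) (hi2 : i ≤ n / 2) :
    (i : ZMod n) ∈ (fun i : ℕ => (i : ZMod n)) '' Set.Icc 1 (n / 2) :=
  ⟨i, Set.mem_Icc.mpr ⟨hi1, hi2⟩, rfl⟩

lemma rep_mem (u : ZMod n) :
    u ∈ (fun i : ℕ => (i : ZMod n)) '' Set.Icc 1 (n / 2) ∨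
      u + ((n / 2 : ℕ) : ZMod n) ∈ (fun i : ℕ => (i : ZMod n)) '' Set.Icc 1 (n / 2) := by
  haveI : NeZero n := ⟨by omega⟩
  have hval : u.val < n := ZMod.val_lt u
  have hcast : ((u.val : ℕ) : ZMod n) = u := ZMod.natCast_rightInverse u
  by_cases h : 1 ≤ u.val ∧ u.val ≤ n / 2
  · left
    rw [← hcast]
    exact mem_Z hn hev h.1 h.2
  push_neg at h
  by_cases h0 : u.val = 0
  · right
    have hu0 : u = 0 := (ZMod.val_eq_zero u).mp h0
    rw [hu0, zero_add]
    exact mem_Z hn hev (by omega) le_rfl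
  · right
    have hge : n / 2 + 1 ≤ u.val := by
      rcases Nat.lt_or_ge u.val 1 with h'|h'
      · omega
      · exact by omega
    have hkey : ((u.val - n / 2 : ℕ) : ZMod n) = u + ((n / 2 : ℕ) : ZMod n) := by
      have h2 : u.val - n / 2 + n = u.val + n / 2 := by
        have := half_add_half hn hev; omega
      have : ((u.val - n / 2 : ℕ) : ZMod n) = ((u.val + n / 2 : ℕ) : ZMod n) := by
        rw [← h2, Nat.cast_add, ZMod.natCast_self, add_zero]
      rw [this, Nat.cast_add, hcast]
    rw [← hkey]
    exact mem_Z hn hev (by omega) (by omega)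

lemma not_antipode_mem {z : ZMod n}
    (hz : z ∈ (fun i : ℕ => (i : ZMod n)) '' Set.Icc 1 (n / 2)) :
    z + ((n / 2 : ℕ) : ZMod n) ∉ (fun i : ℕ => (i : ZMod n)) '' Set.Icc 1 (n / 2) := by
  rintro ⟨j, hj, hj2⟩
  obtain ⟨i, hi, rfl⟩ := hz
  simp only [Set.mem_Icc] at hi hj
  have hhalf := half_add_half hn hev
  have heq : ((i + n / 2 : ℕ) : ZMod n) = ((j : ℕ) : ZMod n) := by
    rw [Nat.cast_add]; exact hj2.symm
  by_cases hc : i + n / 2 = n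
  · rw [hc, ZMod.natCast_self] at heq
    have : j = 0 := cast_inj_of_lt (n := n) (a := j) (b := 0)
      (by omega) (by omega) (by simpa using heq.symm)
    omega
  · have : i + n / 2 = j := cast_inj_of_lt (n := n) (a := i + n / 2) (b := j) (by omega) (by omega) heq
    omega

lemma exists_third (a b : ZMod n) :
    ∃ y ∈ (fun i : ℕ => (i : ZMod n)) '' Set.Icc 1 (n / 2), y ≠ a ∧ y ≠ b := by
  have h1 : ((1 : ℕ) : ZMod n) ∈ _ := mem_Z hn hev le_rfl (by omega)
  have h2 : ((2 : ℕ) : ZMod n) ∈ _ := mem_Z hn hev (by omega) (by omega)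
  have h3 : ((3 : ℕ) : ZMod n) ∈ _ := mem_Z hn hev (by omega) (by omega)
  have d12 : ((1 : ℕ) : ZMod n) ≠ ((2 : ℕ) : ZMod n) := fun h =>
    by have := cast_inj_of_lt (n := n) (by omega) (by omega) h; omega
  have d13 : ((1 : ℕ) : ZMod n) ≠ ((3 : ℕ) : ZMod n) := fun h =>
    by have := cast_inj_of_lt (n := n) (by omega) (by omega) h; omega
  have d23 : ((2 : ℕ) : ZMod n) ≠ ((3 : ℕ) : ZMod n) := fun h =>
    by have := cast_inj_of_lt (n := n) (by omega) (by omega) h; omega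
  by_cases e1 : ((1 : ℕ) : ZMod n) ≠ a ∧ ((1 : ℕ) : ZMod n) ≠ b
  · exact ⟨_, h1, e1⟩
  by_cases e2 : ((2 : ℕ) : ZMod n) ≠ a ∧ ((2 : ℕ) : ZMod n) ≠ b
  · exact ⟨_, h2, e2⟩
  push_neg at e1 e2
  refine ⟨_, h3, fun h => ?_, fun h => ?_⟩
  · by_cases h1b : ((1 : ℕ) : ZMod n) = b
    · by_cases h2b : ((2 : ℕ) : ZMod n) = b
      · exact d12 (h1b.trans h2b.symm)
      · have h2a : ((2 : ℕ) : ZMod n) = a := by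
          by_contra hc
          exact h2b (e2 hc)
        exact d23 (h2a.trans h.symm)
    · have h1a : ((1 : ℕ) : ZMod n) = a := by
        by_contra hc
        exact h1b (e1 hc)
      exact d13 (h1a.trans h.symm)
  · by_cases h1a : ((1 : ℕ) : ZMod n) = a
    · by_cases h2a : ((2 : ℕ) : ZMod n) = a
      · exact d12 (h1a.trans h2a.symm)
      · exact d23 ((e2 h2a).trans h.symm)
    · exact d13 ((e1 h1a).trans h.symm)

lemma Z_doubly_resolving :
    IsDoublyResolving (cocktailParty n) ((fun i : ℕ => (i : ZMod n)) '' Set.Icc 1 (n / 2)) := by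
  intro u v huv
  have hMM := MM hn hev
  have hcancel : ∀ x : ZMod n, x + ((n / 2 : ℕ) : ZMod n) + ((n / 2 : ℕ) : ZMod n) = x := by
    intro x; rw [add_assoc, hMM, add_zero]
  by_cases hA : v = u + ((n / 2 : ℕ) : ZMod n)
  · subst hA
    rcases rep_mem hn hev u with hu | hu
    · obtain ⟨y, hy, hy1, hy2⟩ := exists_third hn hev u (u + ((n / 2 : ℕ) : ZMod n))
      refine ⟨u, hu, y, hy, ?_⟩
      rw [SimpleGraph.dist_self, dist_adj hn hev (Ne.symm hy1) hy2,
        SimpleGraph.dist_comm, dist_antipode hn hev,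
        dist_adj hn hev (Ne.symm hy2) (by rw [hcancel]; exact hy1)]
      norm_num
    · obtain ⟨y, hy, hy1, hy2⟩ := exists_third hn hev u (u + ((n / 2 : ℕ) : ZMod n))
      refine ⟨u + ((n / 2 : ℕ) : ZMod n), hu, y, hy, ?_⟩
      rw [dist_antipode hn hev, dist_adj hn hev (Ne.symm hy1) hy2,
        SimpleGraph.dist_self,
        dist_adj hn hev (Ne.symm hy2) (by rw [hcancel]; exact hy1)]
      norm_num
  · have hA' : u ≠ v + ((n / 2 : ℕ) : ZMod n) := fun h => hA (antipode_symm hn hev h)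
    rcases rep_mem hn hev u with hu | hu <;> rcases rep_mem hn hev v with hv | hv
    · refine ⟨u, hu, v, hv, ?_⟩
      simp only [SimpleGraph.dist_self]
      rw [dist_adj hn hev huv hA, dist_adj hn hev (Ne.symm huv) hA']
      norm_num
    · -- u ∈ Z, v + M ∈ Z
      obtain ⟨y, hy, hy1, hy2⟩ := exists_third hn hev u (v + ((n / 2 : ℕ) : ZMod n))
      have hyu : y ≠ u + ((n / 2 : ℕ) : ZMod n) := by
        intro h; rw [h] at hy; exact not_antipode_mem hn hev hu hy
      have hvy : v ≠ y := by
        intro h; rw [← h] at hy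
        have := not_antipode_mem hn hev hv
        rw [hcancel] at this; exact this hy
      refine ⟨u, hu, y, hy, ?_⟩
      simp only [SimpleGraph.dist_self]
      rw [dist_adj hn hev (Ne.symm hy1) hyu,
        dist_adj hn hev (Ne.symm huv) hA',
        dist_adj hn hev hvy hy2]
      norm_num
    · -- u + M ∈ Z, v ∈ Z
      obtain ⟨y, hy, hy1, hy2⟩ := exists_third hn hev v (u + ((n / 2 : ℕ) : ZMod n))
      have hyv : y ≠ v + ((n / 2 : ℕ) : ZMod n) := by
        intro h; rw [h] at hy; exact not_antipode_mem hn hev hv hy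
      have huy : u ≠ y := by
        intro h; rw [← h] at hy
        have := not_antipode_mem hn hev hu
        rw [hcancel] at this; exact this hy
      refine ⟨v, hv, y, hy, ?_⟩
      simp only [SimpleGraph.dist_self]
      rw [dist_adj hn hev (Ne.symm hy1) hyv,
        dist_adj hn hev huv hA,
        dist_adj hn hev huy hy2]
      norm_num
    · -- u + M ∈ Z, v + M ∈ Z
      have hne : u + ((n / 2 : ℕ) : ZMod n) ≠ v + ((n / 2 : ℕ) : ZMod n) :=
        fun h => huv (add_right_cancel h)
      refine ⟨u + ((n / 2 : ℕ) : ZMod n), hu, v + ((n / 2 : ℕ) : ZMod n), hv, ?_⟩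
      rw [dist_antipode hn hev u, dist_antipode hn hev v,
        dist_adj hn hev hA' hne.symm,
        dist_adj hn hev hA hne]
      norm_num

lemma lower_bound (Z : Set (ZMod n)) (hZ : IsDoublyResolving (cocktailParty n) Z) :
    n / 2 ≤ Z.ncard := by
  classical
  haveI : NeZero n := ⟨by omega⟩
  have hhalf := half_add_half hn hev
  have key : ∀ u : ZMod n, u ∈ Z ∨ u + ((n / 2 : ℕ) : ZMod n) ∈ Z := by
    intro u
    by_contra hcon
    push_neg at hcon
    obtain ⟨hu, huM⟩ := hcon
    obtain ⟨x, hx, y, hy, hxy⟩ := hZ u (u + ((n / 2 : ℕ) : ZMod n)) (addM_ne hn hev u).symm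
    have hdist : ∀ z ∈ Z, (cocktailParty n).dist u z = 1 ∧
        (cocktailParty n).dist (u + ((n / 2 : ℕ) : ZMod n)) z = 1 := by
      intro z hz
      have hz1 : u ≠ z := fun h => hu (h ▸ hz)
      have hz2 : z ≠ u + ((n / 2 : ℕ) : ZMod n) := fun h => huM (h ▸ hz)
      have hz3 : z ≠ u + ((n / 2 : ℕ) : ZMod n) + ((n / 2 : ℕ) : ZMod n) := by
        rw [add_assoc, MM hn hev, add_zero]; exact fun h => hz1 h.symm
      exact ⟨dist_adj hn hev hz1 hz2, dist_adj hn hev (Ne.symm hz2) hz3⟩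
    obtain ⟨hx1, hx2⟩ := hdist x hx
    obtain ⟨hy1, hy2⟩ := hdist y hy
    rw [hx1, hx2, hy1, hy2] at hxy
    exact hxy rfl
  set f : ℕ → ZMod n := fun i => if (i : ZMod n) ∈ Z then (i : ZMod n) else (i : ZMod n) + ((n / 2 : ℕ) : ZMod n) with hf
  have hmaps : ∀ i ∈ Set.Icc 1 (n / 2), f i ∈ Z := by
    intro i _
    rw [hf]
    rcases key (i : ZMod n) with h | h
    · simpa [h] using h
    · by_cases h' : (i : ZMod n) ∈ Z
      · simpa [h'] using h'
      · simpa [h'] using h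
  have hinj : Set.InjOn f (Set.Icc 1 (n / 2)) := by
    intro i hi j hj hij
    simp only [Set.mem_Icc] at hi hj
    rw [hf] at hij
    simp only at hij
    by_cases ci : (i : ZMod n) ∈ Z <;> by_cases cj : (j : ZMod n) ∈ Z
    · rw [if_pos ci, if_pos cj] at hij
      exact cast_inj_of_lt (by omega) (by omega) hij
    · rw [if_pos ci, if_neg cj] at hij
      have heq : ((i : ℕ) : ZMod n) = ((j + n / 2 : ℕ) : ZMod n) := by
        rw [Nat.cast_add]; exact hij
      by_cases hc : j + n / 2 = n
      · rw [hc, ZMod.natCast_self] at heq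
        have : i = 0 := cast_inj_of_lt (n := n) (a := i) (b := 0)
          (by omega) (by omega) (by simpa using heq)
        omega
      · have := cast_inj_of_lt (by omega) (by omega) heq
        omega
    · rw [if_neg ci, if_pos cj] at hij
      have heq : ((j : ℕ) : ZMod n) = ((i + n / 2 : ℕ) : ZMod n) := by
        rw [Nat.cast_add]; exact hij.symm
      by_cases hc : i + n / 2 = n
      · rw [hc, ZMod.natCast_self] at heq
        have : j = 0 := cast_inj_of_lt (n := n) (a := j) (b := 0)
          (by omega) (by omega) (by simpa using heq)
        omega
      · have := cast_inj_of_lt (by omega) (by omega) heq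
        omega
    · rw [if_neg ci, if_neg cj] at hij
      exact cast_inj_of_lt (by omega) (by omega) (add_right_cancel hij)
  have hle := Set.ncard_le_ncard_of_injOn f hmaps hinj (Set.toFinite Z)
  have hicc : (Set.Icc 1 (n / 2)).ncard = n / 2 := by
    rw [← Finset.coe_Icc, Set.ncard_coe_finset, Nat.card_Icc]
    omega
  omega

end Even
end CPAux

theorem cocktailParty_doublyResolvingDim (n : ℕ) (hn : 8 ≤ n) (hev : Even n) (k : ℕ)
    (hk : k = n / 2 - 1) :
    doublyResolvingDim (cocktailParty n) = k + 1 ∧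
    IsDoublyResolving (cocktailParty n) ((fun i : ℕ => (i : ZMod n)) '' Set.Icc 1 (k + 1)) := by
  have hk1 : k + 1 = n / 2 := by omega
  have hDR := CPAux.Z_doubly_resolving hn hev
  rw [← hk1] at hDR
  refine ⟨?_, hDR⟩
  have hcard : ((fun i : ℕ => (i : ZMod n)) '' Set.Icc 1 (k + 1)).ncard = k + 1 := by
    rw [Set.ncard_image_of_injOn, ← Finset.coe_Icc, Set.ncard_coe_finset, Nat.card_Icc]
    · omega
    · intro a ha b hb hab
      simp only [Set.mem_Icc] at ha hb
      exact CPAux.cast_inj_of_lt (by omega) (by omega) hab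
  apply le_antisymm
  · exact Nat.sInf_le ⟨_, hDR, hcard⟩
  · refine le_csInf ⟨k + 1, _, hDR, hcard⟩ ?_
    rintro b ⟨Z, hZ, rfl⟩
    have := CPAux.lower_bound hn hev Z hZ
    omega
end

section
/- Let n ≥ 8 be an even integer and let k = n/2 − 1. Let Γ = Cay(ℤ_n, S_k) be the Cayley graph on ℤ_n with connection set S_k = ℤ_n \ {0, n/2}. Then the strong metric dimension of Γ equals k + 1; in particular, the clique N = {1, 2, ..., k, k+1} is a strong resolving set of Γ. -/
open SimpleGraph

/-- `w` strongly resolves `u` and `v`: `u` lies on a shortest `v`–`w` path or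
`v` lies on a shortest `u`–`w` path. -/
def StronglyResolves {V : Type*} (G : SimpleGraph V) (w u v : V) : Prop :=
  G.dist v w = G.dist v u + G.dist u w ∨ G.dist u w = G.dist u v + G.dist v w

/-- `N` is a strong resolving set of `G`. -/
def IsStrongResolving {V : Type*} (G : SimpleGraph V) (N : Set V) : Prop :=
  ∀ u v : V, u ≠ v → ∃ w ∈ N, StronglyResolves G w u v

/-- The strong metric dimension of `G`: the minimum cardinality of a strong
resolving set. -/
noncomputable def strongMetricDim {V : Type*} (G : SimpleGraph V) : ℕ :=
  sInf {k | ∃ N : Set V, IsStrongResolving G N ∧ N.ncard = k}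

theorem cocktailParty_strongMetricDim (n : ℕ) (hn : 8 ≤ n) (hev : Even n) (k : ℕ)
    (hk : k = n / 2 - 1) :
    strongMetricDim (cocktailParty n) = k + 1 ∧
    IsStrongResolving (cocktailParty n) ((fun i : ℕ => (i : ZMod n)) '' Set.Icc 1 (k + 1)) := by
  obtain ⟨m', hm'⟩ := hev
  set m : ℕ := n / 2 with hmdef
  have hm4 : 4 ≤ m := by omega
  have hnm : n = 2 * m := by omega
  haveI : NeZero n := ⟨by omega⟩
  set M : ZMod n := ((n / 2 : ℕ) : ZMod n) with hMdef
  have hMm : M = ((m : ℕ) : ZMod n) := rfl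
  have castinj : ∀ a b : ℕ, a < n → b < n → (a : ZMod n) = (b : ZMod n) → a = b := by
    intro a b ha hb h
    have := congrArg ZMod.val h
    rwa [ZMod.val_cast_of_lt ha, ZMod.val_cast_of_lt hb] at this
  have hMM : M + M = 0 := by
    rw [hMm, ← Nat.cast_add]
    have : m + m = n := by omega
    rw [this, ZMod.natCast_self]
  have hnegM : -M = M := neg_eq_of_add_eq_zero_left hMM
  have hM0 : M ≠ 0 := by
    intro h
    have : (m : ZMod n) = ((0 : ℕ) : ZMod n) := by rw [← hMm, h, Nat.cast_zero]
    have := castinj m 0 (by omega) (by omega) this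
    omega
  have h1M : (1 : ZMod n) ≠ M := by
    intro h
    have : ((1 : ℕ) : ZMod n) = ((m : ℕ) : ZMod n) := by rw [Nat.cast_one, h, hMm]
    have := castinj 1 m (by omega) (by omega) this
    omega
  have h10 : (1 : ZMod n) ≠ 0 := by
    intro h
    have : ((1 : ℕ) : ZMod n) = ((0 : ℕ) : ZMod n) := by rw [Nat.cast_one, h, Nat.cast_zero]
    have := castinj 1 0 (by omega) (by omega) this
    omega
  have adj_of : ∀ x y : ZMod n, x ≠ y → y - x ≠ M → (cocktailParty n).Adj x y := by
    intro x y h1 h2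
    refine ⟨h1, h2, fun h => h2 ?_⟩
    have h' : y - x = -(x - y) := by ring
    rw [h', h, ← hMdef, hnegM]
  have dist1 : ∀ x y : ZMod n, x ≠ y → y - x ≠ M → (cocktailParty n).dist x y = 1 := by
    intro x y h1 h2
    exact SimpleGraph.dist_eq_one_iff_adj.mpr (adj_of x y h1 h2)
  have dist2 : ∀ x : ZMod n, (cocktailParty n).dist x (x + M) = 2 := by
    intro x
    have hne : x ≠ x + M := by
      intro h; exact hM0 (by linear_combination -h)
    have hadj1 : (cocktailParty n).Adj x (x + 1) := by
      apply adj_of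
      · intro h; exact h10 (by linear_combination -h)
      · intro h; exact h1M (by linear_combination h)
    have hadj2 : (cocktailParty n).Adj (x + 1) (x + M) := by
      apply adj_of
      · intro h
        exact h1M (by linear_combination h)
      · intro h
        exact h10 (by linear_combination -h)
    have hle : (cocktailParty n).dist x (x + M) ≤ 2 := by
      have := SimpleGraph.dist_le (Walk.cons hadj1 (Walk.cons hadj2 Walk.nil))
      simpa using this
    have hnadj : ¬ (cocktailParty n).Adj x (x + M) := by
      rintro ⟨-, h2, -⟩
      exact h2 (by ring)
    have hne1 : (cocktailParty n).dist x (x + M) ≠ 1 := fun h =>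
      hnadj (SimpleGraph.dist_eq_one_iff_adj.mp h)
    have hne0 : (cocktailParty n).dist x (x + M) ≠ 0 := by
      intro h
      rcases SimpleGraph.dist_eq_zero_iff_eq_or_not_reachable.mp h with h' | h'
      · exact hne h'
      · exact h' ⟨Walk.cons hadj1 (Walk.cons hadj2 Walk.nil)⟩
    omega
  set Nset : Set (ZMod n) := ((fun i : ℕ => (i : ZMod n)) '' Set.Icc 1 (k + 1)) with hNset
  have hk1 : k + 1 = m := by omega
  have memN : ∀ x : ZMod n, x ∈ Nset ↔ ∃ i : ℕ, 1 ≤ i ∧ i ≤ m ∧ (i : ZMod n) = x := by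
    intro x
    simp only [hNset, Set.mem_image, Set.mem_Icc, hk1]
    constructor
    · rintro ⟨i, ⟨h1, h2⟩, h3⟩; exact ⟨i, h1, h2, h3⟩
    · rintro ⟨i, h1, h2, h3⟩; exact ⟨i, ⟨h1, h2⟩, h3⟩
  have compl : ∀ x : ZMod n, x ∉ Nset → x + M ∈ Nset := by
    intro x hx
    have hxval : ((x.val : ℕ) : ZMod n) = x := by
      simp [ZMod.natCast_val, ZMod.cast_id]
    have hvlt : x.val < n := ZMod.val_lt x
    rcases Nat.lt_or_ge x.val 1 with h0 | h1
    · have hx0 : x = 0 := by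
        have hv0 : x.val = 0 := by omega
        rw [← hxval, hv0, Nat.cast_zero]
      rw [memN]
      refine ⟨m, by omega, le_refl m, ?_⟩
      rw [hx0, zero_add]
    · rcases le_or_gt x.val m with h2 | h2
      · exact absurd ((memN x).mpr ⟨x.val, h1, h2, hxval⟩) hx
      · rw [memN]
        refine ⟨x.val + m - n, by omega, by omega, ?_⟩
        have : ((x.val + m - n : ℕ) : ZMod n) = ((x.val + m : ℕ) : ZMod n) := by
          have hsplit : x.val + m = (x.val + m - n) + n := by omega
          have e1 : ((x.val + m : ℕ) : ZMod n) = ((x.val + m - n + n : ℕ) : ZMod n) := by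
            rw [← hsplit]
          rw [e1, Nat.cast_add, ZMod.natCast_self, add_zero]
        rw [this, Nat.cast_add, hxval, hMm]
  have hSR : IsStrongResolving (cocktailParty n) Nset := by
    intro u v huv
    by_cases hu : u ∈ Nset
    · exact ⟨u, hu, Or.inl (by rw [SimpleGraph.dist_self, add_zero])⟩
    by_cases hv : v ∈ Nset
    · exact ⟨v, hv, Or.inr (by rw [SimpleGraph.dist_self, add_zero])⟩
    refine ⟨u + M, compl u hu, Or.inr ?_⟩
    have d1 : (cocktailParty n).dist u (u + M) = 2 := dist2 u
    have d2 : (cocktailParty n).dist u v = 1 := by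
      apply dist1 u v huv
      intro h
      have : v = u + M := by linear_combination h
      exact hv (this ▸ compl u hu)
    have d3 : (cocktailParty n).dist v (u + M) = 1 := by
      apply dist1
      · intro h; exact hv (h ▸ compl u hu)
      · intro h
        exact huv (by linear_combination h)
    rw [d1, d2, d3]
  have hcard : Nset.ncard = k + 1 := by
    rw [hNset]
    rw [Set.ncard_image_of_injOn]
    · rw [← Finset.coe_Icc, Set.ncard_coe_finset, Nat.card_Icc]
      omega
    · intro a ha b hb hab
      simp only [Set.mem_Icc] at ha hb
      exact castinj a b (by omega) (by omega) hab
  have lower : ∀ N' : Set (ZMod n), IsStrongResolving (cocktailParty n) N' → k + 1 ≤ N'.ncard := by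
    intro N' hN'
    have key : ∀ x : ZMod n, x ∈ N' ∨ x + M ∈ N' := by
      intro x
      have hne : x ≠ x + M := fun h => hM0 (by linear_combination -h)
      obtain ⟨w, hw, hres⟩ := hN' x (x + M) hne
      have hwx : w = x ∨ w = x + M := by
        by_contra hc
        push_neg at hc
        obtain ⟨hc1, hc2⟩ := hc
        have d1 : (cocktailParty n).dist x w = 1 := by
          apply dist1
          · exact fun h => hc1 h.symm
          · intro h; exact hc2 (by linear_combination h)
        have d2 : (cocktailParty n).dist (x + M) w = 1 := by
          apply dist1
          · exact fun h => hc2 h.symm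
          · intro h
            apply hc1
            have : w = x + M + M := by linear_combination h
            rw [this, add_assoc, hMM, add_zero]
        have d3 : (cocktailParty n).dist x (x + M) = 2 := dist2 x
        have d4 : (cocktailParty n).dist (x + M) x = 2 := by
          rw [SimpleGraph.dist_comm]; exact d3
        rcases hres with h | h
        · rw [d2, d4, d1] at h; omega
        · rw [d1, d3, d2] at h; omega
      rcases hwx with h | h
      · exact Or.inl (h ▸ hw)
      · exact Or.inr (h ▸ hw)
    classical
    set f : ℕ → ZMod n := fun i => if (i : ZMod n) ∈ N' then (i : ZMod n) else (i : ZMod n) + M with hf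
    have hmaps : f '' Set.Iio m ⊆ N' := by
      rintro _ ⟨i, hi, rfl⟩
      simp only [hf]
      split_ifs with h
      · exact h
      · rcases key (i : ZMod n) with h' | h'
        · exact absurd h' h
        · exact h'
    have hcastne : ∀ a b : ℕ, a < m → b < m → (a : ZMod n) ≠ (b : ZMod n) + M := by
      intro a b ha hb h
      have : ((a : ℕ) : ZMod n) = ((b + m : ℕ) : ZMod n) := by
        push_cast
        rw [← hMm]; exact h
      have := castinj a (b + m) (by omega) (by omega) this
      omega
    have hinj : Set.InjOn f (Set.Iio m) := by
      intro a ha b hb hab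
      simp only [Set.mem_Iio] at ha hb
      simp only [hf] at hab
      split_ifs at hab with h1 h2 h2
      · exact castinj a b (by omega) (by omega) hab
      · exact absurd hab (hcastne a b ha hb)
      · exact absurd hab.symm (hcastne b a hb ha)
      · have : (a : ZMod n) = (b : ZMod n) := by
          have := congrArg (fun z => z - M) hab
          simpa using this
        exact castinj a b (by omega) (by omega) this
    have h1 : (f '' Set.Iio m).ncard = m := by
      rw [Set.ncard_image_of_injOn hinj, ← Finset.coe_range, Set.ncard_coe_finset,
        Finset.card_range]
    have h2 : (f '' Set.Iio m).ncard ≤ N'.ncard :=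
      Set.ncard_le_ncard hmaps (Set.toFinite N')
    omega
  constructor
  · apply le_antisymm
    · exact Nat.sInf_le ⟨Nset, hSR, hcard⟩
    · have hSne : {j | ∃ N : Set (ZMod n),
          IsStrongResolving (cocktailParty n) N ∧ N.ncard = j}.Nonempty :=
        ⟨k + 1, Nset, hSR, hcard⟩
      apply le_csInf hSne
      rintro b ⟨N', hN', rfl⟩
      exact lower N' hN'
  · exact hSR
end

section
/- Let n ≥ 4 and let Γ = Cay(D_{2n}, Ω) be the Cayley graph on the dihedral group D_{2n} = ⟨a, b | aⁿ = b² = 1, ba = aⁿ⁻¹b⟩ with connection set Ω = {a, a², ..., aⁿ⁻¹, ab, a²b, ..., aⁿ⁻¹b} (so Γ is isomorphic to the cocktail party graph CP(n), the complete graph K_{2n} with a perfect matching removed). Then the minimum cardinality of a resolving set, the minimum cardinality of a doubly resolving set, and the minimum cardinality of a strong resolving set of Γ all equal n. -/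
open SimpleGraph

/-- The Cayley graph `Cay(D_{2n}, Ω)` on the dihedral group
`D_{2n} = ⟨a, b | aⁿ = b² = 1, ba = aⁿ⁻¹b⟩` with connection set
`Ω = {a, a², ..., aⁿ⁻¹, ab, a²b, ..., aⁿ⁻¹b} = D_{2n} \ {1, b}`
(here `b` is `DihedralGroup.sr 0`): `x ~ y` iff `x⁻¹ * y ∈ Ω`.
This graph is isomorphic to the cocktail party graph `CP(n)`. -/
def dihedralCocktailParty (n : ℕ) : SimpleGraph (DihedralGroup n) where
  Adj x y := x⁻¹ * y ≠ 1 ∧ x⁻¹ * y ≠ DihedralGroup.sr 0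
  symm := by
    refine ⟨?_⟩
    rintro x y ⟨h1, h2⟩
    constructor
    · intro h
      apply h1
      have : (y⁻¹ * x)⁻¹ = (1 : DihedralGroup n)⁻¹ := congrArg Inv.inv h
      rwa [mul_inv_rev, inv_inv, inv_one] at this
    · intro h
      apply h2
      have : (y⁻¹ * x)⁻¹ = (DihedralGroup.sr (0 : ZMod n))⁻¹ := congrArg Inv.inv h
      rwa [mul_inv_rev, inv_inv, show (DihedralGroup.sr (0 : ZMod n))⁻¹ =
        DihedralGroup.sr 0 from rfl] at this
  loopless := by
    refine ⟨?_⟩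
    rintro x ⟨h1, -⟩
    exact h1 (by group)

namespace DCPAux

open DihedralGroup

variable {n : ℕ}

lemma adj_iff (x y : DihedralGroup n) :
    (dihedralCocktailParty n).Adj x y ↔ x ≠ y ∧ y ≠ x * sr 0 := by
  show x⁻¹ * y ≠ 1 ∧ x⁻¹ * y ≠ sr 0 ↔ _
  rw [ne_eq, inv_mul_eq_one, ne_eq, inv_mul_eq_iff_eq_mul, ← ne_eq, ← ne_eq]

lemma sr_zero_ne_one : (sr 0 : DihedralGroup n) ≠ 1 := by
  rw [one_def]; intro h; cases h

lemma pp (x : DihedralGroup n) : x * sr 0 * sr 0 = x := by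
  rw [mul_assoc, sr_mul_self, mul_one]

lemma ne_p (x : DihedralGroup n) : x ≠ x * sr 0 :=
  fun h => sr_zero_ne_one (left_eq_mul.mp h)

lemma one_ne_zero' (hn : 4 ≤ n) : (1 : ZMod n) ≠ 0 := by
  haveI : Fact (1 < n) := ⟨by omega⟩
  exact one_ne_zero

lemma two_ne_one' (hn : 4 ≤ n) : (2 : ZMod n) ≠ 1 :=
  fun h => one_ne_zero' hn (by linear_combination h)

lemma two_ne_zero' (hn : 4 ≤ n) : (2 : ZMod n) ≠ 0 := by
  intro h
  have : ((2 : ℕ) : ZMod n) = 0 := by push_cast; exact h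
  rw [ZMod.natCast_eq_zero_iff] at this
  have := Nat.le_of_dvd (by norm_num) this
  omega

lemma dcp_dist (hn : 4 ≤ n) (x y : DihedralGroup n) :
    (dihedralCocktailParty n).dist x y =
      if x = y then 0 else if y = x * sr 0 then 2 else 1 := by
  split_ifs with h1 h2
  · rw [h1, SimpleGraph.dist_self]
  · -- distance 2 via the common neighbor x * r 1
    have a1 : (dihedralCocktailParty n).Adj x (x * r 1) := by
      rw [adj_iff]
      constructor
      · intro h
        have : (1 : DihedralGroup n) = r 1 := mul_left_cancel (by rw [mul_one, ← h])
        rw [one_def] at this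
        exact one_ne_zero' hn (by injection this with h'; exact h'.symm)
      · intro h
        have : (r 1 : DihedralGroup n) = sr 0 := mul_left_cancel h
        simp at this
    have a2 : (dihedralCocktailParty n).Adj (x * r 1) y := by
      rw [adj_iff, h2]
      constructor
      · intro h
        have : (r 1 : DihedralGroup n) = sr 0 := mul_left_cancel h
        simp at this
      · intro h
        rw [mul_assoc] at h
        have : (sr 0 : DihedralGroup n) = r 1 * sr 0 := mul_left_cancel h
        rw [r_mul_sr] at this
        have h0 : (0 : ZMod n) = 0 - 1 := by injection this
        exact one_ne_zero' hn (by linear_combination h0)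
    have hle : (dihedralCocktailParty n).dist x y ≤ 2 := by
      simpa using SimpleGraph.dist_le
        (SimpleGraph.Walk.cons a1 (SimpleGraph.Walk.cons a2 SimpleGraph.Walk.nil))
    have h0 : (dihedralCocktailParty n).dist x y ≠ 0 := by
      intro h
      rcases SimpleGraph.dist_eq_zero_iff_eq_or_not_reachable.mp h with h' | h'
      · exact h1 h'
      · exact h' ⟨SimpleGraph.Walk.cons a1 (SimpleGraph.Walk.cons a2 SimpleGraph.Walk.nil)⟩
    have hne1 : (dihedralCocktailParty n).dist x y ≠ 1 := by
      intro h
      have hadj := SimpleGraph.dist_eq_one_iff_adj.mp h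
      rw [adj_iff] at hadj
      exact hadj.2 h2
    omega
  · rw [SimpleGraph.dist_eq_one_iff_adj, adj_iff]
    exact ⟨h1, h2⟩

/-- pick the rotation element of the pair of `x` -/
def sel : DihedralGroup n → DihedralGroup n
  | .r i => .r i
  | .sr j => .r (-j)

lemma sel_spec (x : DihedralGroup n) : sel x = x ∨ sel x = x * sr 0 := by
  cases x with
  | r i => exact Or.inl rfl
  | sr j => right; rw [sr_mul_sr]; show r (-j) = r (0 - j); rw [zero_sub]

lemma sel_is_r (x : DihedralGroup n) : ∃ i, sel x = r i := by
  cases x with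
  | r i => exact ⟨i, rfl⟩
  | sr j => exact ⟨-j, rfl⟩

lemma r_ne_pair {x : DihedralGroup n} {i k : ZMod n} (hsel : sel x = r i) (hk : k ≠ i) :
    r k ≠ x ∧ r k ≠ x * sr 0 := by
  rcases sel_spec x with h | h
  · rw [h] at hsel
    subst hsel
    refine ⟨by simpa using hk, ?_⟩
    rw [r_mul_sr]
    simp
  · have hx : x = sel x * sr 0 := by rw [h, pp]
    rw [hsel] at hx
    subst hx
    rw [pp]
    refine ⟨?_, by simpa using hk⟩
    rw [r_mul_sr]
    simp

lemma sel_resolves (hn : 4 ≤ n) {u v : DihedralGroup n} (huv : u ≠ v) :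
    (dihedralCocktailParty n).dist u (sel u) ≠ (dihedralCocktailParty n).dist v (sel u) := by
  rcases sel_spec u with h | h <;> rw [h] <;> rw [dcp_dist hn, dcp_dist hn]
  · rw [if_pos rfl, if_neg (Ne.symm huv)]
    split_ifs <;> omega
  · rw [if_neg (ne_p u), if_pos rfl]
    by_cases hv : v = u * sr 0
    · rw [if_pos hv]; omega
    · rw [if_neg hv, if_neg]
      · omega
      · intro hv2
        exact huv (mul_right_cancel hv2)

lemma lower_core (hn : 4 ≤ n) (W : Set (DihedralGroup n))
    (hW : ∀ i : ZMod n, DihedralGroup.r i ∈ W ∨ DihedralGroup.sr (-i) ∈ W) :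
    n ≤ W.ncard := by
  haveI : NeZero n := ⟨by omega⟩
  classical
  set c : ZMod n → DihedralGroup n := fun i => if r i ∈ W then r i else sr (-i) with hc
  have hmem : ∀ i, c i ∈ W := by
    intro i
    by_cases h : r i ∈ W
    · simpa [hc, h] using h
    · rcases hW i with h' | h'
      · exact absurd h' h
      · simpa [hc, h] using h'
  have hinj : Function.Injective c := by
    intro i j hij
    simp only [hc] at hij
    split_ifs at hij
    all_goals
      first
        | exact DihedralGroup.r.inj hij
        | exact neg_injective (DihedralGroup.sr.inj hij)
        | exact absurd hij (by simp)
        | simp at hij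
  calc n = (Set.range c).ncard := by
        rw [← Set.image_univ, Set.ncard_image_of_injective _ hinj, Set.ncard_univ,
          Nat.card_zmod]
    _ ≤ W.ncard := Set.ncard_le_ncard (Set.range_subset_iff.mpr hmem) W.toFinite

lemma Z_ncard : (Set.range (DihedralGroup.r : ZMod n → DihedralGroup n)).ncard = n := by
  rw [← Set.image_univ, Set.ncard_image_of_injective _ (fun a b h => by injection h),
    Set.ncard_univ, Nat.card_zmod]

lemma Z_resolving (hn : 4 ≤ n) :
    IsResolving (dihedralCocktailParty n) (Set.range (DihedralGroup.r : ZMod n → _)) := by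
  intro u v huv
  obtain ⟨i, hi⟩ := sel_is_r u
  exact ⟨sel u, ⟨i, hi.symm⟩, sel_resolves hn huv⟩

lemma resolving_lower (hn : 4 ≤ n) (W : Set (DihedralGroup n)) (hW : IsResolving (dihedralCocktailParty n) W) :
    n ≤ W.ncard := by
  apply lower_core hn
  intro i
  obtain ⟨w, hwW, hw⟩ := hW (r i) (sr (-i)) (by simp)
  rw [dcp_dist hn, dcp_dist hn] at hw
  by_cases h1 : w = r i
  · left; rwa [← h1]
  · by_cases h2 : w = sr (-i)
    · right; rwa [← h2]
    · exfalso
      apply hw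
      have hp1 : w ≠ r i * sr 0 := by
        rw [r_mul_sr, zero_sub]; exact h2
      have hp2 : w ≠ sr (-i) * sr 0 := by
        rw [sr_mul_sr, sub_neg_eq_add, zero_add]; exact h1
      rw [if_neg (fun h => h1 h.symm), if_neg (fun h => hp1 h),
        if_neg (fun h => h2 h.symm), if_neg (fun h => hp2 h)]

lemma doubly_to_resolving {V : Type*} (G : SimpleGraph V) (Z : Set V)
    (h : IsDoublyResolving G Z) : IsResolving G Z := by
  intro u v huv
  obtain ⟨x, hx, y, hy, hxy⟩ := h u v huv
  by_cases h1 : G.dist u x = G.dist v x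
  · refine ⟨y, hy, fun h2 => hxy ?_⟩
    rw [h1, h2]
  · exact ⟨x, hx, h1⟩

lemma Z_doubly (hn : 4 ≤ n) :
    IsDoublyResolving (dihedralCocktailParty n) (Set.range (DihedralGroup.r : ZMod n → _)) := by
  intro u v huv
  obtain ⟨i, hi⟩ := sel_is_r u
  obtain ⟨j, hj⟩ := sel_is_r v
  -- pick k ∉ {i, j}
  obtain ⟨k, hki, hkj⟩ : ∃ k : ZMod n, k ≠ i ∧ k ≠ j := by
    by_cases h : i + 1 = j
    · refine ⟨i + 2, ?_, ?_⟩
      · intro h'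
        exact two_ne_zero' hn (by linear_combination h')
      · intro h'
        rw [← h] at h'
        exact two_ne_one' hn (by linear_combination h')
    · refine ⟨i + 1, ?_, h⟩
      intro h'
      exact one_ne_zero' hn (by linear_combination h')
  refine ⟨sel u, ⟨i, hi.symm⟩, r k, ⟨k, rfl⟩, ?_⟩
  obtain ⟨hu1, hu2⟩ := r_ne_pair hi hki
  obtain ⟨hv1, hv2⟩ := r_ne_pair hj hkj
  have du : (dihedralCocktailParty n).dist u (r k) = 1 := by
    rw [dcp_dist hn, if_neg (fun h => hu1 h.symm), if_neg (fun h => hu2 h)]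
  have dv : (dihedralCocktailParty n).dist v (r k) = 1 := by
    rw [dcp_dist hn, if_neg (fun h => hv1 h.symm), if_neg (fun h => hv2 h)]
  rw [du, dv]
  intro h
  exact sel_resolves hn huv (by exact_mod_cast sub_left_injective h)

lemma Z_strong (hn : 4 ≤ n) :
    IsStrongResolving (dihedralCocktailParty n) (Set.range (DihedralGroup.r : ZMod n → _)) := by
  intro u v huv
  obtain ⟨i, hi⟩ := sel_is_r u
  refine ⟨sel u, ⟨i, hi.symm⟩, ?_⟩
  rcases sel_spec u with h | h <;> rw [h]
  · left
    rw [SimpleGraph.dist_self, add_zero]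
  · by_cases hv : v = u * sr 0
    · right
      rw [← hv, SimpleGraph.dist_self, add_zero]
    · right
      have d1 : (dihedralCocktailParty n).dist u (u * sr 0) = 2 := by
        rw [dcp_dist hn, if_neg (ne_p u), if_pos rfl]
      have d2 : (dihedralCocktailParty n).dist u v = 1 := by
        rw [dcp_dist hn, if_neg huv, if_neg (Ne.symm ?_)]
        exact fun h' => hv h'.symm
      have d3 : (dihedralCocktailParty n).dist v (u * sr 0) = 1 := by
        rw [dcp_dist hn, if_neg hv, if_neg]
        intro h'
        exact huv (mul_right_cancel h')
      rw [d1, d2, d3]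

lemma strong_lower (hn : 4 ≤ n) (W : Set (DihedralGroup n))
    (hW : IsStrongResolving (dihedralCocktailParty n) W) : n ≤ W.ncard := by
  apply lower_core hn
  intro i
  obtain ⟨w, hwW, hw⟩ := hW (r i) (sr (-i)) (by simp)
  have hpair : (sr (-i) : DihedralGroup n) = r i * sr 0 := by
    rw [r_mul_sr, zero_sub]
  have hpair' : (r i : DihedralGroup n) = sr (-i) * sr 0 := by
    rw [sr_mul_sr, sub_neg_eq_add, zero_add]
  have duv : (dihedralCocktailParty n).dist (r i) (sr (-i)) = 2 := by
    rw [dcp_dist hn, if_neg (by simp), if_pos hpair]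
  have dvu : (dihedralCocktailParty n).dist (sr (-i)) (r i) = 2 := by
    rw [dcp_dist hn, if_neg (by simp), if_pos hpair']
  have dub : ∀ x y : DihedralGroup n, (dihedralCocktailParty n).dist x y ≤ 2 := by
    intro x y
    rw [dcp_dist hn]
    split_ifs <;> omega
  rcases hw with h | h
  · -- dist (sr -i) w = 2 + dist (r i) w, forces dist (r i) w = 0f
    rw [dvu] at h
    have h0 : (dihedralCocktailParty n).dist (r i) w = 0 := by
      have := dub (sr (-i)) w
      omega
    rw [dcp_dist hn] at h0
    split_ifs at h0 with he
    · left; rwa [← he] at hwW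
  · rw [duv] at h
    have h0 : (dihedralCocktailParty n).dist (sr (-i)) w = 0 := by
      have := dub (r i) w
      omega
    rw [dcp_dist hn] at h0
    split_ifs at h0 with he
    · right; rwa [← he] at hwW

end DCPAux

theorem dihedralCocktailParty_dims (n : ℕ) (hn : 4 ≤ n) :
    metricDim (dihedralCocktailParty n) = n ∧
    doublyResolvingDim (dihedralCocktailParty n) = n ∧
    strongMetricDim (dihedralCocktailParty n) = n := by
  open DCPAux in
  refine ⟨le_antisymm ?_ ?_, le_antisymm ?_ ?_, le_antisymm ?_ ?_⟩
  · exact Nat.sInf_le ⟨_, Z_resolving hn, Z_ncard⟩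
  · exact le_csInf ⟨n, _, Z_resolving hn, Z_ncard⟩
      (by rintro k ⟨W, hW, rfl⟩; exact resolving_lower hn W hW)
  · exact Nat.sInf_le ⟨_, Z_doubly hn, Z_ncard⟩
  · exact le_csInf ⟨n, _, Z_doubly hn, Z_ncard⟩
      (by rintro k ⟨W, hW, rfl⟩; exact resolving_lower hn W (doubly_to_resolving _ _ hW))
  · exact Nat.sInf_le ⟨_, Z_strong hn, Z_ncard⟩
  · exact le_csInf ⟨n, _, Z_strong hn, Z_ncard⟩
      (by rintro k ⟨W, hW, rfl⟩; exact strong_lower hn W hW)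
end
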